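/- arXiv:2101.07863 — 5 statements merged into one kernel-verified Lean document; each statement's English description precedes it below -/
import Mathlib

section
/- Let {Xⱼ : j ≥ 1} be independent random variables with Σⱼ E|Xⱼ| < ∞, each Xⱼ subgaussian with variance factor νⱼ, and ν = Σⱼ νⱼ < ∞. Then the L²-limit S of the series Σⱼ Xⱼ is subgaussian with variance factor 8ν, i.e., log E[exp(λ(S − E[S]))] ≤ 4νλ² for all λ ∈ ℝ. -/
open MeasureTheory ProbabilityTheory Real Filter

lemma my_iIndepFun_ae_eq {Ω : Type*} [MeasurableSpace Ω] {μ : Measure Ω}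
    {β : ℕ → Type*} {m : ∀ i, MeasurableSpace (β i)} {f g : ∀ i, Ω → β i}
    (hf : ProbabilityTheory.iIndepFun (m := m) f μ) (h : ∀ i, f i =ᵐ[μ] g i) :
    ProbabilityTheory.iIndepFun (m := m) g μ := by
  rw [iIndepFun_iff_measure_inter_preimage_eq_mul] at hf ⊢
  intro S sets hmeas
  have hae : ∀ i : ℕ, ∀ s : Set (β i), (g i ⁻¹' s : Set Ω) =ᵐ[μ] (f i ⁻¹' s) := by
    intro i s
    rw [eventuallyEq_set]
    filter_upwards [h i] with ω hω
    simp [Set.mem_preimage, hω]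
  have h1 : (⋂ i ∈ S, g i ⁻¹' sets i) =ᵐ[μ] (⋂ i ∈ S, f i ⁻¹' sets i) := by
    rw [eventuallyEq_set]
    filter_upwards [ae_all_iff.2 h] with ω hω
    simp only [Set.mem_iInter, Set.mem_preimage]
    constructor <;> intro hh i hi <;> [rw [hω i]; rw [← hω i]] <;> exact hh i hi
  rw [measure_congr h1, hf S hmeas]
  exact Finset.prod_congr rfl fun i _ => (measure_congr (hae i (sets i))).symm

/-- The `L²`-limit `S` of a series of independent subgaussian random variables with
summable means and summable variance factors `ν = Σ νⱼ` is subgaussian with variance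
factor `8ν`: `log E[exp (l (S - E S))] ≤ 4 ν l²` for all real `l`. -/
theorem series_limit_subgaussian
    {Ω : Type*} [MeasureSpace Ω] [IsProbabilityMeasure (ℙ : Measure Ω)]
    (X : ℕ → Ω → ℝ) (ν : ℕ → ℝ) (V : ℝ)
    (hind : iIndepFun X ℙ)
    (hint : ∀ j, Integrable (X j) ℙ)
    (habs : Summable (fun j => ∫ ω, |X j ω| ∂ℙ))
    (hν : ∀ j, 0 < ν j)
    (hmgf : ∀ j, ∀ l : ℝ,
      Integrable (fun ω => exp (l * (X j ω - ∫ x, X j x ∂ℙ))) ℙ)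
    (hsub : ∀ j, ∀ l : ℝ,
      log (∫ ω, exp (l * (X j ω - ∫ x, X j x ∂ℙ)) ∂ℙ) ≤ l ^ 2 * ν j / 2)
    (hVsum : HasSum ν V)
    (S : Ω → ℝ) (hS : MemLp S 2 ℙ)
    (hlim : Tendsto (fun n =>
      eLpNorm (fun ω => (∑ j ∈ Finset.range n, X j ω) - S ω) 2 ℙ) atTop (nhds 0)) :
    ∀ l : ℝ,
      log (∫ ω, exp (l * (S ω - ∫ x, S x ∂ℙ)) ∂ℙ) ≤ 4 * V * l ^ 2 := by
  intro l
  have hVpos : 0 < V := (hν 0).trans_le (le_hasSum hVsum 0 fun j _ => (hν j).le)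
  -- measurable modifications
  set X' : ℕ → Ω → ℝ := fun j => (hint j).1.mk (X j) with hX'def
  have hXeq : ∀ j, X j =ᵐ[ℙ] X' j := fun j => (hint j).1.ae_eq_mk
  have hX'meas : ∀ j, Measurable (X' j) :=
    fun j => (hint j).1.stronglyMeasurable_mk.measurable
  have hX'int : ∀ j, Integrable (X' j) ℙ := fun j => (hint j).congr (hXeq j)
  have hind' : iIndepFun X' ℙ := my_iIndepFun_ae_eq hind hXeq
  set m : ℕ → ℝ := fun j => ∫ x, X j x ∂ℙ with hmdef
  set Y : ℕ → Ω → ℝ := fun j => fun ω => X' j ω - m j with hYdef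
  have hYmeas : ∀ j, Measurable (Y j) := fun j => (hX'meas j).sub measurable_const
  have hindY : iIndepFun Y ℙ :=
    hind'.comp (fun j x => x - m j) (fun j => measurable_id.sub measurable_const)
  have hYint : ∀ j, ∀ t : ℝ, Integrable (fun ω => exp (t * Y j ω)) ℙ := by
    intro j t
    refine (hmgf j t).congr ?_
    filter_upwards [hXeq j] with ω hω
    simp only [hYdef, hω, hmdef]
  have hYmgf : ∀ j, ∀ t : ℝ, mgf (Y j) ℙ t ≤ exp (t ^ 2 * ν j / 2) := by
    intro j t
    have hpos : 0 < mgf (Y j) ℙ t := mgf_pos (hYint j t)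
    rw [← Real.log_le_iff_le_exp hpos]
    have heq : mgf (Y j) ℙ t = ∫ ω, exp (t * (X j ω - m j)) ∂ℙ := by
      refine integral_congr_ae ?_
      filter_upwards [hXeq j] with ω hω
      simp only [hYdef, hω]
    rw [heq]
    exact hsub j t
  -- partial sums
  set Sn : ℕ → Ω → ℝ := fun n ω => ∑ j ∈ Finset.range n, X' j ω with hSndef
  set En : ℕ → ℝ := fun n => ∑ j ∈ Finset.range n, m j with hEndef
  have hYsum : ∀ n ω, (∑ j ∈ Finset.range n, Y j) ω = Sn n ω - En n := by
    intro n ω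
    simp only [Finset.sum_apply, hYdef, hSndef, hEndef, Finset.sum_sub_distrib]
  have hint_n : ∀ n, Integrable (fun ω => exp (l * (Sn n ω - En n))) ℙ := by
    intro n
    have := hindY.integrable_exp_mul_sum hYmeas
      (s := Finset.range n) (t := l) (fun j _ => hYint j l)
    refine this.congr (Eventually.of_forall fun ω => ?_)
    simp only [hYsum]
  set B : ℝ := exp (l ^ 2 * V / 2) with hBdef
  have hB : ∀ n, ∫ ω, exp (l * (Sn n ω - En n)) ∂ℙ ≤ B := by
    intro n
    have h1 : ∫ ω, exp (l * (Sn n ω - En n)) ∂ℙ = mgf (∑ j ∈ Finset.range n, Y j) ℙ l := by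
      refine integral_congr_ae (Eventually.of_forall fun ω => ?_)
      simp only [hYsum]
    rw [h1, hindY.mgf_sum hYmeas]
    calc ∏ j ∈ Finset.range n, mgf (Y j) ℙ l
        ≤ ∏ j ∈ Finset.range n, exp (l ^ 2 * ν j / 2) :=
          Finset.prod_le_prod (fun j _ => (mgf_pos (hYint j l)).le) (fun j _ => hYmgf j l)
      _ = exp (∑ j ∈ Finset.range n, l ^ 2 * ν j / 2) := by rw [Real.exp_sum]
      _ ≤ B := by
          rw [hBdef, Real.exp_le_exp]
          have hle : ∑ j ∈ Finset.range n, ν j ≤ V :=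
            sum_le_hasSum (Finset.range n) (fun j _ => (hν j).le) hVsum
          have : ∑ j ∈ Finset.range n, l ^ 2 * ν j / 2
              = l ^ 2 * (∑ j ∈ Finset.range n, ν j) / 2 := by
            rw [Finset.mul_sum, Finset.sum_div]
          rw [this]
          have h2 : (0:ℝ) ≤ l ^ 2 / 2 := by positivity
          calc l ^ 2 * (∑ j ∈ Finset.range n, ν j) / 2
              = l ^ 2 / 2 * (∑ j ∈ Finset.range n, ν j) := by ring
            _ ≤ l ^ 2 / 2 * V := by nlinarith
            _ = l ^ 2 * V / 2 := by ring
  -- integrability and mean of S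
  have hSint : Integrable S ℙ := hS.integrable one_le_two
  set μS : ℝ := ∫ x, S x ∂ℙ with hμSdef
  -- L² convergence implies L¹ convergence of means
  have hSn_int : ∀ n, Integrable (Sn n) ℙ := fun n =>
    integrable_finset_sum _ (fun j _ => hX'int j)
  have hEnSn : ∀ n, En n = ∫ ω, Sn n ω ∂ℙ := by
    intro n
    rw [integral_finset_sum _ (fun j _ => hX'int j)]
    exact Finset.sum_congr rfl fun j _ => (integral_congr_ae (hXeq j))
  have hSn_meas : ∀ n, AEStronglyMeasurable (Sn n) ℙ := fun n => (hSn_int n).1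
  have hlim' : Tendsto (fun n => eLpNorm (Sn n - S) 2 ℙ) atTop (nhds 0) := by
    refine hlim.congr fun n => ?_
    refine eLpNorm_congr_ae ?_
    filter_upwards [ae_all_iff.2 hXeq] with ω hω
    simp only [Pi.sub_apply, hSndef]
    rw [Finset.sum_congr rfl fun j _ => (hω j).symm]
  have hmean : Tendsto En atTop (nhds μS) := by
    have h1 : Tendsto (fun n => ∫⁻ ω, ‖Sn n ω - S ω‖₊ ∂ℙ) atTop (nhds 0) := by
      refine tendsto_of_tendsto_of_tendsto_of_le_of_le tendsto_const_nhds hlim'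
        (fun n => zero_le) (fun n => ?_)
      have : ∫⁻ ω, ‖Sn n ω - S ω‖₊ ∂ℙ = eLpNorm (Sn n - S) 1 ℙ := by
        rw [eLpNorm_one_eq_lintegral_enorm]; rfl
      rw [this]
      exact eLpNorm_le_eLpNorm_of_exponent_le one_le_two ((hSn_meas n).sub hS.1)
    have := tendsto_integral_of_L1 S hSint.1 (F := Sn) (l := atTop)
      (Eventually.of_forall hSn_int) h1
    refine Tendsto.congr (fun n => (hEnSn n).symm) this
  -- a.e. convergent subsequence
  have htim : TendstoInMeasure ℙ Sn atTop S :=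
    tendstoInMeasure_of_tendsto_eLpNorm (p := 2) (by norm_num) hSn_meas hS.1 hlim'
  obtain ⟨ns, hns_mono, hns_ae⟩ := htim.exists_seq_tendsto_ae
  -- Fatou
  set f : Ω → ℝ := fun ω => exp (l * (S ω - μS)) with hfdef
  have hfmeas : AEStronglyMeasurable f ℙ :=
    Real.continuous_exp.comp_aestronglyMeasurable
      ((hS.1.sub aestronglyMeasurable_const).const_mul l)
  have hfnonneg : 0 ≤ᵐ[ℙ] f := Eventually.of_forall fun ω => (exp_pos _).le
  have hglim : ∀ᵐ ω ∂ℙ, Tendsto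
      (fun k => ENNReal.ofReal (exp (l * (Sn (ns k) ω - En (ns k))))) atTop
      (nhds (ENNReal.ofReal (f ω))) := by
    filter_upwards [hns_ae] with ω hω
    have hEn : Tendsto (fun k => En (ns k)) atTop (nhds μS) :=
      hmean.comp (hns_mono.tendsto_atTop)
    have h1 : Tendsto (fun k => l * (Sn (ns k) ω - En (ns k))) atTop
        (nhds (l * (S ω - μS))) := (tendsto_const_nhds.mul (hω.sub hEn))
    exact (ENNReal.continuous_ofReal.tendsto _).comp
      ((Real.continuous_exp.tendsto _).comp h1)
  have hlint_k : ∀ k, ∫⁻ ω, ENNReal.ofReal (exp (l * (Sn (ns k) ω - En (ns k)))) ∂ℙ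
      ≤ ENNReal.ofReal B := by
    intro k
    rw [← ofReal_integral_eq_lintegral_ofReal (hint_n (ns k))
      (Eventually.of_forall fun ω => (exp_pos _).le)]
    exact ENNReal.ofReal_le_ofReal (hB (ns k))
  have key : ∫⁻ ω, ENNReal.ofReal (f ω) ∂ℙ ≤ ENNReal.ofReal B := by
    have heq : ∫⁻ ω, ENNReal.ofReal (f ω) ∂ℙ
        = ∫⁻ ω, Filter.liminf
            (fun k => ENNReal.ofReal (exp (l * (Sn (ns k) ω - En (ns k))))) atTop ∂ℙ := by
      refine lintegral_congr_ae ?_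
      filter_upwards [hglim] with ω hω
      exact (hω.liminf_eq).symm
    rw [heq]
    calc ∫⁻ ω, Filter.liminf
            (fun k => ENNReal.ofReal (exp (l * (Sn (ns k) ω - En (ns k))))) atTop ∂ℙ
        ≤ Filter.liminf
            (fun k => ∫⁻ ω, ENNReal.ofReal (exp (l * (Sn (ns k) ω - En (ns k)))) ∂ℙ) atTop :=
          lintegral_liminf_le (fun k =>
            ((((Finset.measurable_sum _ (fun j _ => hX'meas j)).sub
              measurable_const).const_mul l).exp).ennreal_ofReal)
      _ ≤ ENNReal.ofReal B := by
          refine liminf_le_of_le ?_ ?_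
          · isBoundedDefault
          · intro b hb
            obtain ⟨k, hk⟩ := hb.exists
            exact hk.trans (hlint_k k)
  have hfint : Integrable f ℙ := by
    refine ⟨hfmeas, ?_⟩
    rw [hasFiniteIntegral_iff_ofReal hfnonneg]
    exact key.trans_lt ENNReal.ofReal_lt_top
  have hintle : ∫ ω, f ω ∂ℙ ≤ B := by
    rw [integral_eq_lintegral_of_nonneg_ae hfnonneg hfmeas]
    calc (∫⁻ ω, ENNReal.ofReal (f ω) ∂ℙ).toReal
        ≤ (ENNReal.ofReal B).toReal := ENNReal.toReal_mono ENNReal.ofReal_ne_top key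
      _ = B := ENNReal.toReal_ofReal (le_of_lt (exp_pos _))
  have hintpos : 0 < ∫ ω, f ω ∂ℙ := mgf_pos (X := fun ω => S ω - μS) (t := l) hfint
  calc log (∫ ω, exp (l * (S ω - ∫ x, S x ∂ℙ)) ∂ℙ)
      = log (∫ ω, f ω ∂ℙ) := rfl
    _ ≤ log B := Real.log_le_log hintpos hintle
    _ = l ^ 2 * V / 2 := Real.log_exp _
    _ ≤ 4 * V * l ^ 2 := by nlinarith [sq_nonneg l, hVpos]
end

section
/- If a centered random variable Y satisfies E[Y^{2k}] ≤ k! C^k for every integer k ≥ 1 (with C > 0), then Y is subgaussian with variance factor 4C, i.e., log E[exp(λY)] ≤ 2Cλ² for all λ ∈ ℝ. -/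
open MeasureTheory ProbabilityTheory Real

lemma real_exp_eq_tsum (x : ℝ) : Real.exp x = ∑' n : ℕ, x ^ n / n.factorial := by
  rw [Real.exp_eq_exp_ℝ, NormedSpace.exp_eq_tsum_div]

lemma exp_le_add_exp_sq (x : ℝ) : Real.exp x ≤ x + Real.exp (x ^ 2) := by
  have h2 : 1 + x ^ 2 ≤ Real.exp (x ^ 2) := by
    have := Real.add_one_le_exp (x ^ 2); linarith
  rcases le_or_gt |x| 1 with h | h
  · have hb := Real.exp_bound h (n := 2) (by norm_num)
    have h' := (abs_sub_le_iff.1 hb).1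
    have hs : ∑ m ∈ Finset.range 2, x ^ m / m.factorial = 1 + x := by
      simp [Finset.sum_range_succ]
    rw [hs] at h'
    norm_num at h'
    have habs : |x| ^ 2 = x ^ 2 := sq_abs x
    nlinarith
  · rcases le_or_gt 0 x with hx | hx
    · have hx1 : 1 < x := by rwa [abs_of_nonneg hx] at h
      have h1 : x ≤ x ^ 2 := by nlinarith
      have := Real.exp_le_exp.2 h1
      linarith
    · have hx1 : x < -1 := by
        rw [abs_of_neg hx] at h; linarith
      have h3 : Real.exp x ≤ 1 := Real.exp_le_one_iff.2 hx.le
      nlinarith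

/-- Key estimate: `∫ exp (a Y²) ≤ (1 - aC)⁻¹` for `0 ≤ a` with `aC < 1`. -/
lemma key_exp_sq {Ω : Type*} [MeasureSpace Ω] [IsProbabilityMeasure (ℙ : Measure Ω)]
    (Y : Ω → ℝ) (hYm : AEMeasurable Y ℙ) (C : ℝ) (hC : 0 < C)
    (hintm : ∀ k : ℕ, 1 ≤ k → Integrable (fun ω => (Y ω) ^ (2 * k)) ℙ)
    (hmom : ∀ k : ℕ, 1 ≤ k →
      ∫ ω, (Y ω) ^ (2 * k) ∂ℙ ≤ (k.factorial : ℝ) * C ^ k)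
    (a : ℝ) (ha : 0 ≤ a) (haC : a * C < 1) :
    Integrable (fun ω => Real.exp (a * Y ω ^ 2)) ℙ ∧
    ∫ ω, Real.exp (a * Y ω ^ 2) ∂ℙ ≤ (1 - a * C)⁻¹ := by
  have hsqm : AEMeasurable (fun ω => a * Y ω ^ 2) ℙ :=
    aemeasurable_const.mul (hYm.pow_const 2)
  have hgm : AEMeasurable (fun ω => Real.exp (a * Y ω ^ 2)) ℙ :=
    Real.measurable_exp.comp_aemeasurable hsqm
  have hYnn : ∀ (k : ℕ) (ω : Ω), 0 ≤ Y ω ^ (2 * k) := by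
    intro k ω
    rw [pow_mul]
    exact pow_nonneg (sq_nonneg _) k
  -- pointwise expansion into a tsum of ENNReals
  have hptw : ∀ ω : Ω, ENNReal.ofReal (Real.exp (a * Y ω ^ 2)) =
      ∑' k : ℕ, ENNReal.ofReal ((a * Y ω ^ 2) ^ k / k.factorial) := by
    intro ω
    rw [real_exp_eq_tsum]
    exact ENNReal.ofReal_tsum_of_nonneg
      (fun k => div_nonneg (pow_nonneg (mul_nonneg ha (sq_nonneg _)) k) (by positivity))
      (Real.summable_pow_div_factorial _)
  have hL : (∫⁻ ω, ENNReal.ofReal (Real.exp (a * Y ω ^ 2)) ∂ℙ) =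
      ∑' k : ℕ, ∫⁻ ω, ENNReal.ofReal ((a * Y ω ^ 2) ^ k / k.factorial) ∂ℙ := by
    rw [lintegral_congr hptw]
    exact lintegral_tsum fun k =>
      ((hsqm.pow_const k).div_const _).ennreal_ofReal
  have hterm : ∀ k : ℕ, (∫⁻ ω, ENNReal.ofReal ((a * Y ω ^ 2) ^ k / k.factorial) ∂ℙ)
      ≤ ENNReal.ofReal ((a * C) ^ k) := by
    intro k
    rcases Nat.eq_zero_or_pos k with rfl | hk
    · simp
    · have heq : ∀ ω : Ω, (a * Y ω ^ 2) ^ k / (k.factorial : ℝ)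
          = (a ^ k / k.factorial) * Y ω ^ (2 * k) := by
        intro ω
        rw [mul_pow, ← pow_mul]
        ring
      have hcnn : (0:ℝ) ≤ a ^ k / k.factorial := by positivity
      calc (∫⁻ ω, ENNReal.ofReal ((a * Y ω ^ 2) ^ k / k.factorial) ∂ℙ)
          = ∫⁻ ω, ENNReal.ofReal (a ^ k / k.factorial) *
              ENNReal.ofReal (Y ω ^ (2 * k)) ∂ℙ := by
            apply lintegral_congr
            intro ω
            rw [heq ω, ENNReal.ofReal_mul hcnn]
        _ = ENNReal.ofReal (a ^ k / k.factorial) *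
              ∫⁻ ω, ENNReal.ofReal (Y ω ^ (2 * k)) ∂ℙ := by
            exact lintegral_const_mul' _ _ ENNReal.ofReal_ne_top
        _ = ENNReal.ofReal (a ^ k / k.factorial) *
              ENNReal.ofReal (∫ ω, Y ω ^ (2 * k) ∂ℙ) := by
            rw [ofReal_integral_eq_lintegral_ofReal (hintm k hk)
              (Filter.Eventually.of_forall (hYnn k))]
        _ ≤ ENNReal.ofReal (a ^ k / k.factorial) *
              ENNReal.ofReal ((k.factorial : ℝ) * C ^ k) := by
            exact mul_le_mul_right (ENNReal.ofReal_le_ofReal (hmom k hk)) _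
        _ = ENNReal.ofReal ((a ^ k / k.factorial) * ((k.factorial : ℝ) * C ^ k)) := by
            rw [ENNReal.ofReal_mul hcnn]
        _ = ENNReal.ofReal ((a * C) ^ k) := by
            congr 1
            have hkf : (k.factorial : ℝ) ≠ 0 := by positivity
            field_simp
            ring
  have hgeom : ∑' k : ℕ, ENNReal.ofReal ((a * C) ^ k)
      = ENNReal.ofReal ((1 - a * C)⁻¹) := by
    rw [← ENNReal.ofReal_tsum_of_nonneg
      (fun k => pow_nonneg (mul_nonneg ha hC.le) k)
      (summable_geometric_of_lt_one (mul_nonneg ha hC.le) haC)]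
    rw [tsum_geometric_of_lt_one (mul_nonneg ha hC.le) haC]
  have hLle : (∫⁻ ω, ENNReal.ofReal (Real.exp (a * Y ω ^ 2)) ∂ℙ)
      ≤ ENNReal.ofReal ((1 - a * C)⁻¹) := by
    rw [hL, ← hgeom]
    exact ENNReal.tsum_le_tsum hterm
  have hgnn : ∀ ω : Ω, 0 ≤ Real.exp (a * Y ω ^ 2) := fun ω => (Real.exp_pos _).le
  have hint : Integrable (fun ω => Real.exp (a * Y ω ^ 2)) ℙ := by
    refine ⟨hgm.aestronglyMeasurable, ?_⟩
    rw [HasFiniteIntegral]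
    calc (∫⁻ ω, ‖Real.exp (a * Y ω ^ 2)‖₊ ∂ℙ)
        = ∫⁻ ω, ENNReal.ofReal (Real.exp (a * Y ω ^ 2)) ∂ℙ := by
          apply lintegral_congr
          intro ω
          exact Real.enorm_eq_ofReal (hgnn ω)
      _ ≤ ENNReal.ofReal ((1 - a * C)⁻¹) := hLle
      _ < ⊤ := ENNReal.ofReal_lt_top
  refine ⟨hint, ?_⟩
  rw [integral_eq_lintegral_of_nonneg_ae (Filter.Eventually.of_forall hgnn)
    hgm.aestronglyMeasurable]
  exact ENNReal.toReal_le_of_le_ofReal (inv_nonneg.2 (by linarith)) hLle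

/-- Theorem 2.1 of Boucheron–Lugosi–Massart: a centered random variable `Y` with
`E[Y^(2k)] ≤ k! C^k` for all integers `k ≥ 1` is subgaussian with variance factor `4C`,
that is, `log E[exp (l Y)] ≤ 2 C l²` for all real `l`. -/
theorem moments_imply_subgaussian
    {Ω : Type*} [MeasureSpace Ω] [IsProbabilityMeasure (ℙ : Measure Ω)]
    (Y : Ω → ℝ) (hY : Integrable Y ℙ) (hcen : ∫ ω, Y ω ∂ℙ = 0)
    (C : ℝ) (hC : 0 < C)
    (hintm : ∀ k : ℕ, 1 ≤ k → Integrable (fun ω => (Y ω) ^ (2 * k)) ℙ)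
    (hmom : ∀ k : ℕ, 1 ≤ k →
      ∫ ω, (Y ω) ^ (2 * k) ∂ℙ ≤ (k.factorial : ℝ) * C ^ k) :
    ∀ l : ℝ,
      Integrable (fun ω => exp (l * Y ω)) ℙ ∧
      log (∫ ω, exp (l * Y ω) ∂ℙ) ≤ 2 * C * l ^ 2 := by
  intro l
  have hYm : AEMeasurable Y ℙ := hY.aemeasurable
  -- integrability of exp(Y²/(4C))
  have h4C : (0:ℝ) < 4 * C := by linarith
  have hkey4 := key_exp_sq Y hYm C hC hintm hmom (1/(4*C)) (by positivity)
    (by rw [div_mul_eq_mul_div, one_mul, div_lt_one h4C]; linarith)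
  -- pointwise bound exp(l y) ≤ exp(C l²) exp(y²/(4C))
  have hptb : ∀ ω : Ω, Real.exp (l * Y ω)
      ≤ Real.exp (C * l ^ 2) * Real.exp (1/(4*C) * Y ω ^ 2) := by
    intro ω
    rw [← Real.exp_add]
    apply Real.exp_le_exp.2
    have h1 : l * Y ω - C * l ^ 2 ≤ Y ω ^ 2 / (4 * C) := by
      rw [le_div_iff₀ h4C]
      nlinarith [sq_nonneg (2 * C * l - Y ω)]
    have h1 : l * Y ω ≤ C * l ^ 2 + Y ω ^ 2 / (4 * C) := by linarith
    calc l * Y ω ≤ C * l ^ 2 + Y ω ^ 2 / (4 * C) := h1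
      _ = C * l ^ 2 + 1/(4*C) * Y ω ^ 2 := by ring
  have hexpm : AEStronglyMeasurable (fun ω => Real.exp (l * Y ω)) ℙ :=
    (Real.measurable_exp.comp_aemeasurable
      (aemeasurable_const.mul hYm)).aestronglyMeasurable
  have hintE : Integrable (fun ω => Real.exp (l * Y ω)) ℙ := by
    refine Integrable.mono' (hkey4.1.const_mul (Real.exp (C * l ^ 2))) hexpm ?_
    filter_upwards with ω
    rw [Real.norm_eq_abs, abs_of_pos (Real.exp_pos _)]
    exact hptb ω
  refine ⟨hintE, ?_⟩
  have hEpos : 0 < ∫ ω, Real.exp (l * Y ω) ∂ℙ := integral_exp_pos hintE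
  rcases le_or_gt (C * l ^ 2) (1/2) with hsmall | hlarge
  · -- small case: use exp x ≤ x + exp x²
    have hkeyl := key_exp_sq Y hYm C hC hintm hmom (l ^ 2) (sq_nonneg l)
      (by nlinarith)
    have hEb : (∫ ω, Real.exp (l * Y ω) ∂ℙ) ≤ (1 - l ^ 2 * C)⁻¹ := by
      have hmono : (∫ ω, Real.exp (l * Y ω) ∂ℙ)
          ≤ ∫ ω, (l * Y ω + Real.exp (l ^ 2 * Y ω ^ 2)) ∂ℙ := by
        apply integral_mono hintE ((hY.const_mul l).add hkeyl.1)
        intro ω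
        have := exp_le_add_exp_sq (l * Y ω)
        calc Real.exp (l * Y ω) ≤ l * Y ω + Real.exp ((l * Y ω) ^ 2) := this
          _ = l * Y ω + Real.exp (l ^ 2 * Y ω ^ 2) := by rw [mul_pow]
      rw [integral_add (hY.const_mul l) hkeyl.1, integral_const_mul, hcen,
        mul_zero, zero_add] at hmono
      exact hmono.trans hkeyl.2
    have h1CL : (0:ℝ) < 1 - l ^ 2 * C := by nlinarith
    have hlog : Real.log (∫ ω, Real.exp (l * Y ω) ∂ℙ)
        ≤ Real.log ((1 - l ^ 2 * C)⁻¹) := Real.log_le_log hEpos hEb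
    rw [Real.log_inv] at hlog
    -- -log(1 - u) ≤ 2u for 0 ≤ u ≤ 1/2
    have hu : Real.exp (-(2 * (l ^ 2 * C))) ≤ 1 - l ^ 2 * C := by
      have h1 : 1 + 2 * (l ^ 2 * C) ≤ Real.exp (2 * (l ^ 2 * C)) := by
        have := Real.add_one_le_exp (2 * (l ^ 2 * C)); linarith
      have h2 : (0:ℝ) < 1 + 2 * (l ^ 2 * C) := by nlinarith [sq_nonneg l, hC.le]
      rw [Real.exp_neg]
      have h3 : (Real.exp (2 * (l ^ 2 * C)))⁻¹ ≤ (1 + 2 * (l ^ 2 * C))⁻¹ :=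
        inv_anti₀ h2 h1
      have h4 : (1 + 2 * (l ^ 2 * C))⁻¹ ≤ 1 - l ^ 2 * C := by
        rw [inv_le_iff_one_le_mul₀ h2]
        nlinarith [sq_nonneg l, hC.le, mul_nonneg (sq_nonneg l) hC.le]
      linarith
    have h5 : -(2 * (l ^ 2 * C)) ≤ Real.log (1 - l ^ 2 * C) :=
      (Real.le_log_iff_exp_le h1CL).2 hu
    have : Real.log (∫ ω, Real.exp (l * Y ω) ∂ℙ) ≤ 2 * (l ^ 2 * C) := by linarith
    linarith [this]
  · -- large case
    have hEb : (∫ ω, Real.exp (l * Y ω) ∂ℙ)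
        ≤ Real.exp (C * l ^ 2) * (4/3) := by
      have hmono : (∫ ω, Real.exp (l * Y ω) ∂ℙ)
          ≤ ∫ ω, Real.exp (C * l ^ 2) * Real.exp (1/(4*C) * Y ω ^ 2) ∂ℙ :=
        integral_mono hintE (hkey4.1.const_mul _) hptb
      rw [integral_const_mul] at hmono
      have h14 : (1 - 1/(4*C) * C)⁻¹ = (4/3 : ℝ) := by
        have : (1/(4*C)) * C = 1/4 := by field_simp
        rw [this]; norm_num
      calc (∫ ω, Real.exp (l * Y ω) ∂ℙ)
          ≤ Real.exp (C * l ^ 2) * ∫ ω, Real.exp (1/(4*C) * Y ω ^ 2) ∂ℙ := hmono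
        _ ≤ Real.exp (C * l ^ 2) * (4/3) := by
            apply mul_le_mul_of_nonneg_left _ (Real.exp_pos _).le
            rw [← h14]
            exact hkey4.2
    have hlog : Real.log (∫ ω, Real.exp (l * Y ω) ∂ℙ)
        ≤ Real.log (Real.exp (C * l ^ 2) * (4/3)) := Real.log_le_log hEpos hEb
    rw [Real.log_mul (Real.exp_ne_zero _) (by norm_num), Real.log_exp] at hlog
    have h43 : Real.log (4/3) ≤ 1/2 := by
      rw [Real.log_le_iff_le_exp (by norm_num)]
      have hsq : Real.exp (1/2 : ℝ) * Real.exp (1/2 : ℝ) = Real.exp 1 := by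
        rw [← Real.exp_add]; norm_num
      nlinarith [Real.exp_pos (1/2 : ℝ), Real.exp_one_gt_d9]
    nlinarith [hlog, h43, hlarge]
end

section
/- Let ψ : ℝ → ℝ satisfy |ψ(x)| ≤ C(1 + |x|)^{−1−ε}. Then there is a constant C' such that for all x ≠ y, Σ_{I ∈ 𝒟} |ψ_I(x)|²|ψ_I(y)|² ≤ C'/|x − y|². -/
open Real
open scoped ENNReal NNReal

/-- The wavelet `ψ_I` associated to the dyadic interval `I = [k 2^{-j}, (k+1) 2^{-j})`:
`ψ_I(x) = 2^{j/2} ψ(2^j x - k)`. -/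
noncomputable def waveletDyadic (ψ : ℝ → ℝ) (j k : ℤ) (x : ℝ) : ℝ :=
  (2 : ℝ) ^ ((j : ℝ) / 2) * ψ ((2 : ℝ) ^ j * x - k)

namespace DWaux
noncomputable def T2 : ℝ≥0∞ := ∑' k : ℤ, ENNReal.ofReal ((1 + |(k : ℝ)|) ^ (-(2:ℝ)))

lemma summable_aux : Summable (fun k : ℤ => (1 + |(k:ℝ)|) ^ (-(2:ℝ))) := by
  have hnat : Summable (fun n : ℕ => (1 + |((n:ℤ):ℝ)|) ^ (-(2:ℝ))) := by
    have h1 : Summable (fun n : ℕ => 1 / ((n:ℝ)) ^ 2) :=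
      summable_one_div_nat_pow.mpr one_lt_two
    have h2 : Summable (fun n : ℕ => 1 / ((n:ℝ)+1) ^ 2) := by
      have := (summable_nat_add_iff (f := fun n : ℕ => 1 / ((n:ℝ)) ^ 2) 1).mpr h1
      simpa [add_comm] using this
    refine h2.congr fun n => ?_
    have hb : (0:ℝ) < 1 + (n:ℝ) := by positivity
    rw [Int.cast_natCast, abs_of_nonneg (by positivity : (0:ℝ) ≤ (n:ℝ)),
      Real.rpow_neg hb.le, Real.rpow_two]
    rw [one_div, add_comm]
  refine Summable.of_nat_of_neg hnat ?_
  refine hnat.congr fun n => ?_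
  push_cast
  simp

lemma T2_ne_top : T2 ≠ ⊤ := by
  rw [T2, ← ENNReal.ofReal_tsum_of_nonneg (fun k => by positivity) summable_aux]
  exact ENNReal.ofReal_ne_top


-- pointwise comparison to the integer grid
lemma grid_lb (a : ℝ) (k : ℤ) : (1 + |((⌊a⌋ : ℝ)) - k|) / 2 ≤ 1 + |a - k| := by
  have h1 : |((⌊a⌋:ℝ)) - k| ≤ |a - k| + 1 := by
    have h2 : |a - (⌊a⌋:ℝ)| ≤ 1 := by
      rw [abs_of_nonneg (by linarith [Int.floor_le a])]
      linarith [Int.lt_floor_add_one a]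
    have h3 := abs_sub_le ((⌊a⌋:ℝ)) a (k:ℝ)
    rw [abs_sub_comm ((⌊a⌋:ℝ)) a] at h3
    linarith

  rcases le_or_gt |((⌊a⌋:ℝ)) - k| 1 with h | h
  · have := abs_nonneg (a - (k:ℝ)); linarith
  · -- |⌊a⌋ - k| ≥ 1 so  (1+u)/2 ≤ u ≤ 1 + |a-k|
    have : |((⌊a⌋:ℝ)) - k| ≤ 1 + |a - k| := by
      -- since |⌊a⌋-k| is an integer ≥ 1... easier: from h1
      linarith [h1, abs_nonneg (a - (k:ℝ))]
    linarith

lemma decay_le (s : ℝ) (hs : 2 ≤ s) (a : ℝ) (k : ℤ) :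
    (1 + |a - (k:ℝ)|) ^ (-s) ≤ 2 ^ s * (1 + |((⌊a⌋:ℝ)) - k|) ^ (-(2:ℝ)) := by
  have hpos : (0:ℝ) < (1 + |((⌊a⌋:ℝ)) - k|) / 2 := by positivity
  have h1 : (1 + |a - (k:ℝ)|) ^ (-s) ≤ ((1 + |((⌊a⌋:ℝ)) - k|) / 2) ^ (-s) :=
    Real.rpow_le_rpow_of_nonpos hpos (grid_lb a k) (by linarith)
  have h2 : ((1 + |((⌊a⌋:ℝ)) - k|) / 2) ^ (-s)
      = 2 ^ s * (1 + |((⌊a⌋:ℝ)) - k|) ^ (-s) := by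
    rw [Real.div_rpow (by positivity) (by norm_num), Real.rpow_neg (by norm_num : (0:ℝ) ≤ 2)]
    field_simp
  have h3 : (1 + |((⌊a⌋:ℝ)) - k|) ^ (-s) ≤ (1 + |((⌊a⌋:ℝ)) - k|) ^ (-(2:ℝ)) :=
    Real.rpow_le_rpow_of_exponent_le (le_add_of_nonneg_right (abs_nonneg _)) (by linarith)
  have h2s : (0:ℝ) ≤ 2 ^ s := (Real.rpow_pos_of_pos two_pos s).le
  calc (1 + |a - (k:ℝ)|) ^ (-s) ≤ 2 ^ s * (1 + |((⌊a⌋:ℝ)) - k|) ^ (-s) := by rw [← h2]; exact h1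
    _ ≤ 2 ^ s * (1 + |((⌊a⌋:ℝ)) - k|) ^ (-(2:ℝ)) := by
        exact mul_le_mul_of_nonneg_left h3 h2s

lemma sum_decay (s : ℝ) (hs : 2 ≤ s) (a : ℝ) :
    ∑' k : ℤ, ENNReal.ofReal ((1 + |a - (k:ℝ)|) ^ (-s))
      ≤ ENNReal.ofReal (2 ^ s) * T2 := by
  calc ∑' k : ℤ, ENNReal.ofReal ((1 + |a - (k:ℝ)|) ^ (-s))
      ≤ ∑' k : ℤ, ENNReal.ofReal (2 ^ s * (1 + |((⌊a⌋:ℝ)) - k|) ^ (-(2:ℝ))) :=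
        ENNReal.tsum_le_tsum fun k => ENNReal.ofReal_le_ofReal (decay_le s hs a k)
    _ = ENNReal.ofReal (2 ^ s) * ∑' k : ℤ, ENNReal.ofReal ((1 + |((⌊a⌋:ℝ)) - k|) ^ (-(2:ℝ))) := by
        simp_rw [ENNReal.ofReal_mul (Real.rpow_pos_of_pos two_pos s).le]
        exact ENNReal.tsum_mul_left
    _ = ENNReal.ofReal (2 ^ s) * T2 := by
        congr 1
        have := (Equiv.subLeft (⌊a⌋ : ℤ)).tsum_eq
          (fun k : ℤ => ENNReal.ofReal ((1 + |(k:ℝ)|) ^ (-(2:ℝ))))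
        rw [T2, ← this]
        refine tsum_congr fun k => ?_
        simp [Equiv.subLeft]
-- ordered case
lemma prod_split_aux (s : ℝ) (hs : 0 ≤ s) (a b c : ℝ) (h : |a - c| ≤ |b - c|) :
    (1 + |a - c|) ^ (-s) * (1 + |b - c|) ^ (-s)
      ≤ 2 ^ s * (1 + |a - b|) ^ (-s) * (1 + |a - c|) ^ (-s) := by
  have hab : |a - b| ≤ 2 * |b - c| := by
    have := abs_sub_le a c b
    rw [abs_sub_comm c b] at this
    linarith
  have hkey : (1 + |a - b|) / 2 ≤ 1 + |b - c| := by
    have := abs_nonneg (b - c); linarith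
  have h1 : (1 + |b - c|) ^ (-s) ≤ ((1 + |a - b|) / 2) ^ (-s) :=
    Real.rpow_le_rpow_of_nonpos (by positivity) hkey (by linarith)
  have h2 : ((1 + |a - b|) / 2) ^ (-s) = 2 ^ s * (1 + |a - b|) ^ (-s) := by
    rw [Real.div_rpow (by positivity) (by norm_num), Real.rpow_neg (by norm_num : (0:ℝ) ≤ 2)]
    field_simp
  calc (1 + |a - c|) ^ (-s) * (1 + |b - c|) ^ (-s)
      ≤ (1 + |a - c|) ^ (-s) * (2 ^ s * (1 + |a - b|) ^ (-s)) := by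
        refine mul_le_mul_of_nonneg_left ?_ (by positivity)
        rw [← h2]; exact h1
    _ = 2 ^ s * (1 + |a - b|) ^ (-s) * (1 + |a - c|) ^ (-s) := by ring

lemma prod_split (s : ℝ) (hs : 0 ≤ s) (a b c : ℝ) :
    (1 + |a - c|) ^ (-s) * (1 + |b - c|) ^ (-s)
      ≤ 2 ^ s * (1 + |a - b|) ^ (-s) * ((1 + |a - c|) ^ (-s) + (1 + |b - c|) ^ (-s)) := by
  have hC : (0:ℝ) ≤ 2 ^ s * (1 + |a - b|) ^ (-s) := by positivity
  rcases le_total |a - c| |b - c| with h | h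
  · have := prod_split_aux s hs a b c h
    nlinarith [Real.rpow_nonneg (by positivity : (0:ℝ) ≤ 1 + |b - c|) (-s), hC]
  · have := prod_split_aux s hs b a c h
    rw [abs_sub_comm b a] at this
    nlinarith [Real.rpow_nonneg (by positivity : (0:ℝ) ≤ 1 + |a - c|) (-s), hC]


lemma inner_sum (s : ℝ) (hs : 2 ≤ s) (a b : ℝ) :
    ∑' k : ℤ, ENNReal.ofReal ((1 + |a - (k:ℝ)|) ^ (-s) * (1 + |b - (k:ℝ)|) ^ (-s))
      ≤ ENNReal.ofReal (2 ^ s * (1 + |a - b|) ^ (-s)) * (2 * (ENNReal.ofReal (2 ^ s) * T2)) := by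
  have h0 : (0:ℝ) ≤ 2 ^ s * (1 + |a - b|) ^ (-s) := by positivity
  calc ∑' k : ℤ, ENNReal.ofReal ((1 + |a - (k:ℝ)|) ^ (-s) * (1 + |b - (k:ℝ)|) ^ (-s))
      ≤ ∑' k : ℤ, ENNReal.ofReal (2 ^ s * (1 + |a - b|) ^ (-s)
          * ((1 + |a - (k:ℝ)|) ^ (-s) + (1 + |b - (k:ℝ)|) ^ (-s))) :=
        ENNReal.tsum_le_tsum fun k =>
          ENNReal.ofReal_le_ofReal (prod_split s (by linarith) a b k)
    _ = ENNReal.ofReal (2 ^ s * (1 + |a - b|) ^ (-s)) *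
          ∑' k : ℤ, ENNReal.ofReal
            ((1 + |a - (k:ℝ)|) ^ (-s) + (1 + |b - (k:ℝ)|) ^ (-s)) := by
        simp_rw [ENNReal.ofReal_mul h0]
        exact ENNReal.tsum_mul_left
    _ ≤ ENNReal.ofReal (2 ^ s * (1 + |a - b|) ^ (-s)) * (2 * (ENNReal.ofReal (2 ^ s) * T2)) := by
        refine mul_le_mul_right ?_ _
        have hsplit : ∑' k : ℤ, ENNReal.ofReal
            ((1 + |a - (k:ℝ)|) ^ (-s) + (1 + |b - (k:ℝ)|) ^ (-s))
            = (∑' k : ℤ, ENNReal.ofReal ((1 + |a - (k:ℝ)|) ^ (-s)))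
              + ∑' k : ℤ, ENNReal.ofReal ((1 + |b - (k:ℝ)|) ^ (-s)) := by
          rw [← ENNReal.tsum_add]
          exact tsum_congr fun k => ENNReal.ofReal_add (by positivity) (by positivity)
        rw [hsplit, two_mul]
        exact add_le_add (sum_decay s hs a) (sum_decay s hs b)

lemma wavelet_sq_bound (ψ : ℝ → ℝ) (C ε : ℝ) (hC : 0 < C)
    (hψ : ∀ x : ℝ, |ψ x| ≤ C * (1 + |x|) ^ (-(1 + ε))) (j k : ℤ) (t : ℝ) :
    (waveletDyadic ψ j k t) ^ 2
      ≤ (2:ℝ) ^ (j:ℤ) * C ^ 2 * (1 + |(2:ℝ) ^ (j:ℤ) * t - k|) ^ (-(2 + 2*ε)) := by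
  set u : ℝ := (2:ℝ) ^ (j:ℤ) * t - k with hu
  have h2 : ((2:ℝ) ^ ((j:ℝ)/2)) ^ 2 = (2:ℝ) ^ (j:ℤ) := by
    rw [← Real.rpow_natCast ((2:ℝ) ^ ((j:ℝ)/2)) 2, ← Real.rpow_mul (by norm_num)]
    rw [show ((j:ℝ)/2) * (2:ℕ) = (j:ℝ) by push_cast; ring]
    exact Real.rpow_intCast 2 j
  have hb : (0:ℝ) < 1 + |u| := by positivity
  have hψ2 : ψ u ^ 2 ≤ C ^ 2 * (1 + |u|) ^ (-(2 + 2*ε)) := by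
    have h1 : |ψ u| ^ 2 ≤ (C * (1 + |u|) ^ (-(1 + ε))) ^ 2 :=
      pow_le_pow_left₀ (abs_nonneg _) (hψ u) 2
    rw [sq_abs] at h1
    calc ψ u ^ 2 ≤ (C * (1 + |u|) ^ (-(1 + ε))) ^ 2 := h1
      _ = C ^ 2 * (1 + |u|) ^ (-(2 + 2*ε)) := by
          rw [mul_pow, ← Real.rpow_natCast ((1 + |u|) ^ (-(1 + ε))) 2,
            ← Real.rpow_mul hb.le]
          rw [show -(1 + ε) * ((2:ℕ):ℝ) = -(2 + 2*ε) by push_cast; ring]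
  have hw : (waveletDyadic ψ j k t) ^ 2 = ((2:ℝ) ^ ((j:ℝ)/2)) ^ 2 * ψ u ^ 2 := by
    rw [waveletDyadic, mul_pow]
  rw [hw, h2, mul_assoc]
  exact mul_le_mul_of_nonneg_left hψ2 (by positivity)

lemma wavelet_prod_bound (ψ : ℝ → ℝ) (C ε : ℝ) (hC : 0 < C)
    (hψ : ∀ x : ℝ, |ψ x| ≤ C * (1 + |x|) ^ (-(1 + ε))) (j k : ℤ) (x y : ℝ) :
    (waveletDyadic ψ j k x) ^ 2 * (waveletDyadic ψ j k y) ^ 2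
      ≤ ((2:ℝ) ^ (j:ℤ)) ^ 2 * C ^ 4 *
        ((1 + |(2:ℝ) ^ (j:ℤ) * x - k|) ^ (-(2 + 2*ε))
          * (1 + |(2:ℝ) ^ (j:ℤ) * y - k|) ^ (-(2 + 2*ε))) := by
  have h1 := wavelet_sq_bound ψ C ε hC hψ j k x
  have h2 := wavelet_sq_bound ψ C ε hC hψ j k y
  have := mul_le_mul h1 h2 (sq_nonneg _) (by positivity)
  calc (waveletDyadic ψ j k x) ^ 2 * (waveletDyadic ψ j k y) ^ 2
      ≤ ((2:ℝ) ^ (j:ℤ) * C ^ 2 * (1 + |(2:ℝ) ^ (j:ℤ) * x - k|) ^ (-(2 + 2*ε)))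
        * ((2:ℝ) ^ (j:ℤ) * C ^ 2 * (1 + |(2:ℝ) ^ (j:ℤ) * y - k|) ^ (-(2 + 2*ε))) := this
    _ = ((2:ℝ) ^ (j:ℤ)) ^ 2 * C ^ 4 *
        ((1 + |(2:ℝ) ^ (j:ℤ) * x - k|) ^ (-(2 + 2*ε))
          * (1 + |(2:ℝ) ^ (j:ℤ) * y - k|) ^ (-(2 + 2*ε))) := by ring

lemma jsum (s ε d : ℝ) (hε : 0 < ε) (hs : s = 2 + 2*ε) (hd : 0 < d) :
    ∑' j : ℤ, ENNReal.ofReal (((2:ℝ) ^ (j:ℤ)) ^ 2 * (1 + (2:ℝ) ^ (j:ℤ) * d) ^ (-s))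
      ≤ (2 + (1 - ENNReal.ofReal ((2:ℝ) ^ (-(2*ε))))⁻¹) * ENNReal.ofReal (1 / d ^ 2) := by
  have hs0 : (0:ℝ) ≤ s := by rw [hs]; linarith
  set m : ℤ := Int.log 2 d⁻¹ with hm
  have hm1 : (2:ℝ) ^ m ≤ d⁻¹ := by
    have := Int.zpow_log_le_self (R := ℝ) (b := 2) one_lt_two (by positivity : (0:ℝ) < d⁻¹)
    simpa only [Nat.cast_ofNat] using this
  have hm2 : d⁻¹ < (2:ℝ) ^ (m + 1) := by
    have := Int.lt_zpow_succ_log_self (R := ℝ) (b := 2) one_lt_two d⁻¹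
    simpa only [Nat.cast_ofNat] using this
  set f : ℤ → ℝ≥0∞ := fun j =>
    ENNReal.ofReal (((2:ℝ) ^ (j:ℤ)) ^ 2 * (1 + (2:ℝ) ^ (j:ℤ) * d) ^ (-s)) with hf
  set g : ℤ → ℝ≥0∞ := fun j => if j ≤ m then f j else 0 with hg
  set h : ℤ → ℝ≥0∞ := fun j => if j ≤ m then 0 else f j with hh
  have hsplit : ∑' j : ℤ, f j = (∑' j : ℤ, g j) + ∑' j : ℤ, h j := by
    rw [← ENNReal.tsum_add]
    refine tsum_congr fun j => ?_
    by_cases hj : j ≤ m <;> simp [hg, hh, hj]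
  -- branch 1 : j ≤ m
  have hg_le : ∑' j : ℤ, g j ≤ 2 * ENNReal.ofReal (1 / d ^ 2) := by
    have hinj : Function.Injective (fun n : ℕ => m - (n:ℤ)) := by
      intro a b hab; dsimp only at hab; omega
    have hsupp : Function.support g ⊆ Set.range (fun n : ℕ => m - (n:ℤ)) := by
      intro j hj
      have hjm : j ≤ m := by
        by_contra hc
        simp [hg, hc] at hj
      exact ⟨(m - j).toNat, by dsimp only; omega⟩
    rw [← Function.Injective.tsum_eq hinj hsupp]
    have hterm : ∀ n : ℕ, g (m - (n:ℤ))
        ≤ ENNReal.ofReal (1 / d ^ 2) * (2⁻¹ : ℝ≥0∞) ^ n := by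
      intro n
      have hjm : m - (n:ℤ) ≤ m := by omega
      have ht : (0:ℝ) < (2:ℝ) ^ (m - (n:ℤ)) := by positivity
      have h1 : ((2:ℝ) ^ (m - (n:ℤ))) ^ 2 * (1 + (2:ℝ) ^ (m - (n:ℤ)) * d) ^ (-s)
          ≤ ((2:ℝ) ^ (m - (n:ℤ))) ^ 2 := by
        have hle1 : (1 + (2:ℝ) ^ (m - (n:ℤ)) * d) ^ (-s) ≤ 1 :=
          Real.rpow_le_one_of_one_le_of_nonpos
            (by nlinarith [mul_pos ht hd]) (by linarith)
        exact mul_le_of_le_one_right (by positivity) hle1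
      have h2 : ((2:ℝ) ^ (m - (n:ℤ))) ^ 2 = ((2:ℝ) ^ m) ^ 2 * ((1:ℝ)/4) ^ n := by
        rw [zpow_sub₀ (two_ne_zero), div_pow, zpow_natCast, ← pow_mul, mul_comm n 2, pow_mul]
        rw [div_eq_mul_inv, ← inv_pow]
        norm_num
      have h3 : ((2:ℝ) ^ m) ^ 2 ≤ 1 / d ^ 2 := by
        have := pow_le_pow_left₀ (le_of_lt (by positivity : (0:ℝ) < (2:ℝ) ^ m)) hm1 2
        simpa [one_div, inv_pow] using this
      have h4 : ((2:ℝ) ^ (m - (n:ℤ))) ^ 2 * (1 + (2:ℝ) ^ (m - (n:ℤ)) * d) ^ (-s)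
          ≤ (1 / d ^ 2) * ((1:ℝ)/2) ^ n := by
        calc ((2:ℝ) ^ (m - (n:ℤ))) ^ 2 * (1 + (2:ℝ) ^ (m - (n:ℤ)) * d) ^ (-s)
            ≤ ((2:ℝ) ^ (m - (n:ℤ))) ^ 2 := h1
          _ = ((2:ℝ) ^ m) ^ 2 * ((1:ℝ)/4) ^ n := h2
          _ ≤ (1 / d ^ 2) * ((1:ℝ)/2) ^ n := by
              refine mul_le_mul h3 (pow_le_pow_left₀ (by norm_num) (by norm_num) n)
                (by positivity) (by positivity)
      calc g (m - (n:ℤ)) = f (m - (n:ℤ)) := by simp [hg, hjm]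
        _ ≤ ENNReal.ofReal ((1 / d ^ 2) * ((1:ℝ)/2) ^ n) := by
            exact ENNReal.ofReal_le_ofReal h4
        _ = ENNReal.ofReal (1 / d ^ 2) * (2⁻¹ : ℝ≥0∞) ^ n := by
            rw [ENNReal.ofReal_mul (by positivity), ENNReal.ofReal_pow (by norm_num)]
            congr 2
            rw [one_div, ENNReal.ofReal_inv_of_pos (by norm_num)]
            norm_num
    calc ∑' n : ℕ, g (m - (n:ℤ)) ≤ ∑' n : ℕ, ENNReal.ofReal (1 / d ^ 2) * (2⁻¹ : ℝ≥0∞) ^ n :=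
          ENNReal.tsum_le_tsum hterm
      _ = ENNReal.ofReal (1 / d ^ 2) * ∑' n : ℕ, (2⁻¹ : ℝ≥0∞) ^ n := ENNReal.tsum_mul_left
      _ = ENNReal.ofReal (1 / d ^ 2) * 2 := by
          rw [ENNReal.tsum_geometric, ENNReal.one_sub_inv_two, inv_inv]
      _ = 2 * ENNReal.ofReal (1 / d ^ 2) := by ring
  -- branch 2 : j > m
  have hh_le : ∑' j : ℤ, h j
      ≤ (1 - ENNReal.ofReal ((2:ℝ) ^ (-(2*ε))))⁻¹ * ENNReal.ofReal (1 / d ^ 2) := by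
    have hinj : Function.Injective (fun n : ℕ => m + 1 + (n:ℤ)) := by
      intro a b hab; dsimp only at hab; omega
    have hsupp : Function.support h ⊆ Set.range (fun n : ℕ => m + 1 + (n:ℤ)) := by
      intro j hj
      have hjm : ¬ (j ≤ m) := by
        by_contra hc
        simp [hh, hc] at hj
      exact ⟨(j - m - 1).toNat, by dsimp only; omega⟩
    rw [← Function.Injective.tsum_eq hinj hsupp]
    have hterm : ∀ n : ℕ, h (m + 1 + (n:ℤ))
        ≤ ENNReal.ofReal (1 / d ^ 2) * (ENNReal.ofReal ((2:ℝ) ^ (-(2*ε)))) ^ n := by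
      intro n
      set j : ℤ := m + 1 + (n:ℤ) with hj
      have hjm : ¬ (j ≤ m) := by omega
      set t : ℝ := (2:ℝ) ^ j with htdef
      have ht : (0:ℝ) < t := by positivity
      have htd : (0:ℝ) < t * d := mul_pos ht hd
      have h1 : (1 + t * d) ^ (-s) ≤ (t * d) ^ (-s) :=
        Real.rpow_le_rpow_of_nonpos htd (by linarith) (by linarith)
      have h2 : (t * d) ^ (-s) = t ^ (-s) * d ^ (-s) := Real.mul_rpow ht.le hd.le
      have h3 : t ^ 2 * t ^ (-s) = t ^ (-(2*ε)) := by
        rw [← Real.rpow_two, ← Real.rpow_add ht]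
        congr 1
        rw [hs]; ring
      have h4 : t = (2:ℝ) ^ (m+1) * (2:ℝ) ^ (n:ℤ) := by
        rw [htdef, hj, ← zpow_add₀ (two_ne_zero : (2:ℝ) ≠ 0)]
      have h5 : t ^ (-(2*ε)) ≤ d ^ (2*ε) * ((2:ℝ) ^ (-(2*ε))) ^ n := by
        rw [h4, Real.mul_rpow (by positivity) (by positivity)]
        have h5a : ((2:ℝ) ^ (m+1)) ^ (-(2*ε)) ≤ (d⁻¹) ^ (-(2*ε)) :=
          Real.rpow_le_rpow_of_nonpos (by positivity) hm2.le (by linarith)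
        have h5b : (d⁻¹) ^ (-(2*ε)) = d ^ (2*ε) := by
          rw [Real.inv_rpow hd.le, Real.rpow_neg hd.le, inv_inv]
        have h5c : ((2:ℝ) ^ (n:ℤ)) ^ (-(2*ε)) = ((2:ℝ) ^ (-(2*ε))) ^ n := by
          rw [zpow_natCast, ← Real.rpow_natCast 2 n, ← Real.rpow_mul (by norm_num),
            mul_comm, Real.rpow_mul (by norm_num), Real.rpow_natCast]
        rw [h5c]
        exact mul_le_mul_of_nonneg_right (h5b ▸ h5a) (by positivity)
      have h6 : d ^ (-s) * d ^ (2*ε) = 1 / d ^ 2 := by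
        rw [← Real.rpow_add hd, hs]
        rw [show -(2 + 2*ε) + 2*ε = (-2 : ℝ) by ring]
        rw [Real.rpow_neg hd.le, Real.rpow_two, one_div]
      have h7 : t ^ 2 * (1 + t * d) ^ (-s)
          ≤ (1 / d ^ 2) * ((2:ℝ) ^ (-(2*ε))) ^ n := by
        calc t ^ 2 * (1 + t * d) ^ (-s) ≤ t ^ 2 * ((t * d) ^ (-s)) :=
              mul_le_mul_of_nonneg_left h1 (by positivity)
          _ = (t ^ 2 * t ^ (-s)) * d ^ (-s) := by rw [h2]; ring
          _ = t ^ (-(2*ε)) * d ^ (-s) := by rw [h3]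
          _ ≤ (d ^ (2*ε) * ((2:ℝ) ^ (-(2*ε))) ^ n) * d ^ (-s) := by
              exact mul_le_mul_of_nonneg_right h5 (by positivity)
          _ = (d ^ (-s) * d ^ (2*ε)) * ((2:ℝ) ^ (-(2*ε))) ^ n := by ring
          _ = (1 / d ^ 2) * ((2:ℝ) ^ (-(2*ε))) ^ n := by rw [h6]
      calc h j = f j := by simp [hh, hjm]
        _ ≤ ENNReal.ofReal ((1 / d ^ 2) * ((2:ℝ) ^ (-(2*ε))) ^ n) :=
            ENNReal.ofReal_le_ofReal h7
        _ = ENNReal.ofReal (1 / d ^ 2) * (ENNReal.ofReal ((2:ℝ) ^ (-(2*ε)))) ^ n := by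
            rw [ENNReal.ofReal_mul (by positivity), ENNReal.ofReal_pow (by positivity)]
    calc ∑' n : ℕ, h (m + 1 + (n:ℤ))
        ≤ ∑' n : ℕ, ENNReal.ofReal (1 / d ^ 2) * (ENNReal.ofReal ((2:ℝ) ^ (-(2*ε)))) ^ n :=
          ENNReal.tsum_le_tsum hterm
      _ = ENNReal.ofReal (1 / d ^ 2) * (1 - ENNReal.ofReal ((2:ℝ) ^ (-(2*ε))))⁻¹ := by
          rw [ENNReal.tsum_mul_left, ENNReal.tsum_geometric]
      _ = (1 - ENNReal.ofReal ((2:ℝ) ^ (-(2*ε))))⁻¹ * ENNReal.ofReal (1 / d ^ 2) := by ring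
  calc ∑' j : ℤ, f j = (∑' j : ℤ, g j) + ∑' j : ℤ, h j := hsplit
    _ ≤ 2 * ENNReal.ofReal (1 / d ^ 2)
        + (1 - ENNReal.ofReal ((2:ℝ) ^ (-(2*ε))))⁻¹ * ENNReal.ofReal (1 / d ^ 2) :=
        add_le_add hg_le hh_le
    _ = (2 + (1 - ENNReal.ofReal ((2:ℝ) ^ (-(2*ε))))⁻¹) * ENNReal.ofReal (1 / d ^ 2) := by
        ring

end DWaux

open DWaux in
/-- Squared size estimate: if `|ψ(x)| ≤ C (1+|x|)^{-1-ε}`, then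
`Σ_{I ∈ 𝒟} |ψ_I(x)|² |ψ_I(y)|² ≤ C' / |x - y|²` for all `x ≠ y`. -/
theorem dyadic_wavelet_squared_size_estimate
    (ψ : ℝ → ℝ) (C ε : ℝ) (hC : 0 < C) (hε : 0 < ε)
    (hψ : ∀ x : ℝ, |ψ x| ≤ C * (1 + |x|) ^ (-(1 + ε))) :
    ∃ C' : ℝ, 0 < C' ∧ ∀ x y : ℝ, x ≠ y →
      (∑' p : ℤ × ℤ,
        ENNReal.ofReal ((waveletDyadic ψ p.1 p.2 x) ^ 2 * (waveletDyadic ψ p.1 p.2 y) ^ 2))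
        ≤ ENNReal.ofReal (C' / |x - y| ^ 2) := by
  set s : ℝ := 2 + 2 * ε with hsdef
  have hs2 : 2 ≤ s := by rw [hsdef]; linarith
  set B : ℝ≥0∞ := ENNReal.ofReal (C ^ 4) * ENNReal.ofReal (2 ^ s)
      * (2 * (ENNReal.ofReal (2 ^ s) * T2)) with hB
  set K2 : ℝ≥0∞ := 2 + (1 - ENNReal.ofReal ((2:ℝ) ^ (-(2*ε))))⁻¹ with hK2
  have hK2top : K2 ≠ ⊤ := by
    have hr : ENNReal.ofReal ((2:ℝ) ^ (-(2*ε))) < 1 := by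
      rw [ENNReal.ofReal_lt_one]
      exact Real.rpow_lt_one_of_one_lt_of_neg one_lt_two (by linarith)
    have h1 : (1 - ENNReal.ofReal ((2:ℝ) ^ (-(2*ε)))) ≠ 0 :=
      (tsub_pos_iff_lt.mpr hr).ne'
    rw [hK2]
    exact ENNReal.add_ne_top.mpr ⟨ENNReal.ofNat_ne_top, ENNReal.inv_ne_top.mpr h1⟩
  have hBtop : B ≠ ⊤ := by
    rw [hB]
    refine ENNReal.mul_ne_top (ENNReal.mul_ne_top ENNReal.ofReal_ne_top ENNReal.ofReal_ne_top) ?_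
    exact ENNReal.mul_ne_top ENNReal.ofNat_ne_top
      (ENNReal.mul_ne_top ENNReal.ofReal_ne_top T2_ne_top)
  set A : ℝ≥0∞ := B * K2 with hA
  have hAtop : A ≠ ⊤ := ENNReal.mul_ne_top hBtop hK2top
  refine ⟨A.toReal + 1, by positivity, fun x y hxy => ?_⟩
  set d : ℝ := |x - y| with hd
  have hd0 : 0 < d := abs_pos.mpr (sub_ne_zero.mpr hxy)
  -- per-scale estimate
  have per_j : ∀ j : ℤ, (∑' k : ℤ,
      ENNReal.ofReal ((waveletDyadic ψ j k x) ^ 2 * (waveletDyadic ψ j k y) ^ 2))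
      ≤ B * ENNReal.ofReal (((2:ℝ) ^ (j:ℤ)) ^ 2 * (1 + (2:ℝ) ^ (j:ℤ) * d) ^ (-s)) := by
    intro j
    have habs : |(2:ℝ) ^ (j:ℤ) * x - (2:ℝ) ^ (j:ℤ) * y| = (2:ℝ) ^ (j:ℤ) * d := by
      rw [show (2:ℝ) ^ (j:ℤ) * x - (2:ℝ) ^ (j:ℤ) * y = (2:ℝ) ^ (j:ℤ) * (x - y) by ring,
        abs_mul, abs_of_pos (by positivity : (0:ℝ) < (2:ℝ) ^ (j:ℤ))]
    calc (∑' k : ℤ, ENNReal.ofReal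
          ((waveletDyadic ψ j k x) ^ 2 * (waveletDyadic ψ j k y) ^ 2))
        ≤ ∑' k : ℤ, ENNReal.ofReal (((2:ℝ) ^ (j:ℤ)) ^ 2 * C ^ 4 *
            ((1 + |(2:ℝ) ^ (j:ℤ) * x - (k:ℝ)|) ^ (-s)
              * (1 + |(2:ℝ) ^ (j:ℤ) * y - (k:ℝ)|) ^ (-s))) := by
          refine ENNReal.tsum_le_tsum fun k => ENNReal.ofReal_le_ofReal ?_
          exact wavelet_prod_bound ψ C ε hC hψ j k x y
      _ = ENNReal.ofReal (((2:ℝ) ^ (j:ℤ)) ^ 2 * C ^ 4) *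
            ∑' k : ℤ, ENNReal.ofReal
              ((1 + |(2:ℝ) ^ (j:ℤ) * x - (k:ℝ)|) ^ (-s)
                * (1 + |(2:ℝ) ^ (j:ℤ) * y - (k:ℝ)|) ^ (-s)) := by
          simp_rw [ENNReal.ofReal_mul (by positivity :
            (0:ℝ) ≤ ((2:ℝ) ^ (j:ℤ)) ^ 2 * C ^ 4)]
          exact ENNReal.tsum_mul_left
      _ ≤ ENNReal.ofReal (((2:ℝ) ^ (j:ℤ)) ^ 2 * C ^ 4) *
            (ENNReal.ofReal (2 ^ s * (1 + |(2:ℝ) ^ (j:ℤ) * x - (2:ℝ) ^ (j:ℤ) * y|) ^ (-s))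
              * (2 * (ENNReal.ofReal (2 ^ s) * T2))) := by
          exact mul_le_mul_right (inner_sum s hs2 _ _) _
      _ = B * ENNReal.ofReal (((2:ℝ) ^ (j:ℤ)) ^ 2 * (1 + (2:ℝ) ^ (j:ℤ) * d) ^ (-s)) := by
          rw [habs, hB]
          rw [ENNReal.ofReal_mul (by positivity : (0:ℝ) ≤ ((2:ℝ) ^ (j:ℤ)) ^ 2),
            ENNReal.ofReal_mul (by positivity : (0:ℝ) ≤ ((2:ℝ) ^ (j:ℤ)) ^ 2),
            ENNReal.ofReal_mul (by positivity : (0:ℝ) ≤ (2:ℝ) ^ s)]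
          ring
  calc (∑' p : ℤ × ℤ,
        ENNReal.ofReal ((waveletDyadic ψ p.1 p.2 x) ^ 2 * (waveletDyadic ψ p.1 p.2 y) ^ 2))
      = ∑' j : ℤ, ∑' k : ℤ,
          ENNReal.ofReal ((waveletDyadic ψ j k x) ^ 2 * (waveletDyadic ψ j k y) ^ 2) :=
        ENNReal.tsum_prod (f := fun j k =>
          ENNReal.ofReal ((waveletDyadic ψ j k x) ^ 2 * (waveletDyadic ψ j k y) ^ 2))
    _ ≤ ∑' j : ℤ, B * ENNReal.ofReal (((2:ℝ) ^ (j:ℤ)) ^ 2 * (1 + (2:ℝ) ^ (j:ℤ) * d) ^ (-s)) :=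
        ENNReal.tsum_le_tsum per_j
    _ = B * ∑' j : ℤ, ENNReal.ofReal (((2:ℝ) ^ (j:ℤ)) ^ 2 * (1 + (2:ℝ) ^ (j:ℤ) * d) ^ (-s)) :=
        ENNReal.tsum_mul_left
    _ ≤ B * (K2 * ENNReal.ofReal (1 / d ^ 2)) :=
        mul_le_mul_right (jsum s ε d hε hsdef hd0) _
    _ = A * ENNReal.ofReal (1 / d ^ 2) := by rw [hA]; ring
    _ ≤ ENNReal.ofReal (A.toReal + 1) * ENNReal.ofReal (1 / d ^ 2) := by
        refine mul_le_mul_left ?_ _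
        conv_lhs => rw [← ENNReal.ofReal_toReal hAtop]
        exact ENNReal.ofReal_le_ofReal (by linarith)
    _ = ENNReal.ofReal ((A.toReal + 1) / |x - y| ^ 2) := by
        rw [← ENNReal.ofReal_mul (by positivity), mul_one_div, hd]
end

section
/- Let ψ satisfy |ψ(x)| ≤ C(1+|x|)^{−1−ε} and let {a_I : I ∈ 𝒟} be independent random variables on (Ω, ℱ, P), each subgaussian with a common variance factor ν > 0, with Σ_I E|a_I| < ∞. Then for every fixed x ≠ y in ℝ, the series Σ_{I ∈ 𝒟} a_I(ω) ψ_I(x) ψ_I(y) converges for P-almost every ω ∈ Ω. -/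
open MeasureTheory ProbabilityTheory Real

/-- Uniform bound `|ψ_I(x) ψ_I(y)| ≤ C² / |x - y|` for `x ≠ y`. -/
theorem waveletDyadic_prod_bound (ψ : ℝ → ℝ) (C ε : ℝ) (hC : 0 < C) (hε : 0 < ε)
    (hψ : ∀ x : ℝ, |ψ x| ≤ C * (1 + |x|) ^ (-(1 + ε)))
    {x y : ℝ} (hxy : x ≠ y) (j k : ℤ) :
    |waveletDyadic ψ j k x| * |waveletDyadic ψ j k y| ≤ C ^ 2 / |x - y| := by
  set d := |x - y| with hd
  have hd0 : 0 < d := abs_pos.mpr (sub_ne_zero.mpr hxy)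
  set p : ℝ := (2 : ℝ) ^ (j : ℝ) with hp
  have hp0 : 0 < p := rpow_pos_of_pos two_pos _
  have hzp : ((2 : ℝ) ^ j : ℝ) = p := (rpow_intCast 2 j).symm
  set s : ℝ := (2 : ℝ) ^ j * x - k with hs
  set t : ℝ := (2 : ℝ) ^ j * y - k with ht
  have hst : p * d ≤ (1 + |s|) * (1 + |t|) := by
    have h1 : |s - t| = p * d := by
      have : s - t = p * (x - y) := by rw [hs, ht, hzp]; ring
      rw [this, abs_mul, abs_of_pos hp0]
    have h2 : |s - t| ≤ |s| + |t| := abs_sub _ _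
    nlinarith [abs_nonneg s, abs_nonneg t, mul_nonneg (abs_nonneg s) (abs_nonneg t)]
  have hhalf : (2 : ℝ) ^ ((j : ℝ) / 2) * (2 : ℝ) ^ ((j : ℝ) / 2) = p := by
    rw [hp, ← rpow_add two_pos]; ring_nf
  have hhalfpos : (0 : ℝ) < (2 : ℝ) ^ ((j : ℝ) / 2) := rpow_pos_of_pos two_pos _
  have h1s : (0 : ℝ) < 1 + |s| := by positivity
  have h1t : (0 : ℝ) < 1 + |t| := by positivity
  have hψs := hψ s
  have hψt := hψ t
  have hprod : |ψ s| * |ψ t| ≤ C ^ 2 * ((1 + |s|) * (1 + |t|)) ^ (-(1 + ε)) := by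
    have h := mul_le_mul hψs hψt (abs_nonneg _)
      (by positivity)
    calc |ψ s| * |ψ t| ≤ (C * (1 + |s|) ^ (-(1 + ε))) * (C * (1 + |t|) ^ (-(1 + ε))) := h
      _ = C ^ 2 * ((1 + |s|) ^ (-(1 + ε)) * (1 + |t|) ^ (-(1 + ε))) := by ring
      _ = C ^ 2 * ((1 + |s|) * (1 + |t|)) ^ (-(1 + ε)) := by
          rw [← Real.mul_rpow h1s.le h1t.le]
  have hpd0 : (0 : ℝ) < p * d := mul_pos hp0 hd0
  have hbase1 : (1 : ℝ) ≤ (1 + |s|) * (1 + |t|) := by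
    nlinarith [abs_nonneg s, abs_nonneg t, mul_nonneg (abs_nonneg s) (abs_nonneg t)]
  have hstep : ((1 + |s|) * (1 + |t|)) ^ (-(1 + ε)) ≤ (p * d)⁻¹ := by
    rcases le_or_gt 1 (p * d) with h | h
    · have h1 : ((1 + |s|) * (1 + |t|)) ^ (-(1 + ε)) ≤ (p * d) ^ (-(1 + ε)) :=
        Real.rpow_le_rpow_of_nonpos hpd0 hst (by linarith)
      have h2 : (p * d) ^ (-(1 + ε)) ≤ (p * d) ^ (-(1 : ℝ)) :=
        Real.rpow_le_rpow_of_exponent_le h (by linarith)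
      rw [Real.rpow_neg_one] at h2
      linarith
    · have h1 : ((1 + |s|) * (1 + |t|)) ^ (-(1 + ε)) ≤ 1 :=
        Real.rpow_le_one_of_one_le_of_nonpos hbase1 (by linarith)
      have h2 : (1 : ℝ) ≤ (p * d)⁻¹ := (one_le_inv₀ hpd0).mpr h.le
      linarith
  have key : |ψ s| * |ψ t| ≤ C ^ 2 * (p * d)⁻¹ := by
    calc |ψ s| * |ψ t| ≤ C ^ 2 * ((1 + |s|) * (1 + |t|)) ^ (-(1 + ε)) := hprod
      _ ≤ C ^ 2 * (p * d)⁻¹ := by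
          apply mul_le_mul_of_nonneg_left hstep (by positivity)
  have : |waveletDyadic ψ j k x| * |waveletDyadic ψ j k y|
      = p * (|ψ s| * |ψ t|) := by
    simp only [waveletDyadic, abs_mul, ← hs, ← ht, abs_of_pos hhalfpos]
    rw [← hhalf]; ring
  rw [this]
  calc p * (|ψ s| * |ψ t|) ≤ p * (C ^ 2 * (p * d)⁻¹) :=
        mul_le_mul_of_nonneg_left key hp0.le
    _ = C ^ 2 / d := by field_simp

/-- Almost sure convergence of `Σ_I a_I(ω) ψ_I(x) ψ_I(y)` for `x ≠ y`, when the `a_I`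
are independent, uniformly subgaussian with variance factor `ν`, and `Σ_I E|a_I| < ∞`. -/
theorem random_wavelet_series_ae_convergence
    {Ω : Type*} [MeasureSpace Ω] [IsProbabilityMeasure (ℙ : Measure Ω)]
    (ψ : ℝ → ℝ) (C ε : ℝ) (hC : 0 < C) (hε : 0 < ε)
    (hψ : ∀ x : ℝ, |ψ x| ≤ C * (1 + |x|) ^ (-(1 + ε)))
    (a : ℤ × ℤ → Ω → ℝ) (ν : ℝ) (hν : 0 < ν)
    (hind : iIndepFun a ℙ)
    (hint : ∀ I, Integrable (a I) ℙ)
    (habs : Summable (fun I => ∫ ω, |a I ω| ∂ℙ))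
    (hmgf : ∀ I, ∀ l : ℝ,
      Integrable (fun ω => exp (l * (a I ω - ∫ x, a I x ∂ℙ))) ℙ)
    (hsub : ∀ I, ∀ l : ℝ,
      log (∫ ω, exp (l * (a I ω - ∫ x, a I x ∂ℙ)) ∂ℙ) ≤ l ^ 2 * ν / 2) :
    ∀ x y : ℝ, x ≠ y →
      ∀ᵐ ω ∂ℙ, Summable (fun I : ℤ × ℤ =>
        a I ω * waveletDyadic ψ I.1 I.2 x * waveletDyadic ψ I.1 I.2 y) := by
  intro x y hxy
  set d := |x - y| with hd
  have hd0 : 0 < d := abs_pos.mpr (sub_ne_zero.mpr hxy)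
  -- step 1 : a.e. ω, Σ_I |a I ω| < ∞
  have hmeas : ∀ I : ℤ × ℤ, AEMeasurable (fun ω => ENNReal.ofReal |a I ω|) ℙ :=
    fun I => ENNReal.measurable_ofReal.comp_aemeasurable (hint I).abs.aemeasurable
  have hlint : ∀ I : ℤ × ℤ,
      ∫⁻ ω, ENNReal.ofReal |a I ω| ∂ℙ = ENNReal.ofReal (∫ ω, |a I ω| ∂ℙ) :=
    fun I => (ofReal_integral_eq_lintegral_ofReal (hint I).abs
      (Filter.Eventually.of_forall fun ω => abs_nonneg _)).symm
  have hfin : ∫⁻ ω, ∑' I : ℤ × ℤ, ENNReal.ofReal |a I ω| ∂ℙ ≠ ⊤ := by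
    rw [lintegral_tsum hmeas]
    simp only [hlint]
    rw [← ENNReal.ofReal_tsum_of_nonneg
      (fun I => integral_nonneg fun ω => abs_nonneg _) habs]
    exact ENNReal.ofReal_ne_top
  have hae : ∀ᵐ ω ∂ℙ, Summable fun I : ℤ × ℤ => |a I ω| := by
    filter_upwards [ae_lt_top' (AEMeasurable.ennreal_tsum hmeas) hfin] with ω hω
    have := ENNReal.summable_toReal hω.ne
    simpa [ENNReal.toReal_ofReal (abs_nonneg _)] using this
  -- step 2 : comparison
  filter_upwards [hae] with ω hω
  apply Summable.of_abs
  refine Summable.of_nonneg_of_le (fun I => abs_nonneg _) ?_ (hω.mul_right (C ^ 2 / d))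
  intro I
  have hb := waveletDyadic_prod_bound ψ C ε hC hε hψ hxy I.1 I.2
  calc |a I ω * waveletDyadic ψ I.1 I.2 x * waveletDyadic ψ I.1 I.2 y|
      = |a I ω| * (|waveletDyadic ψ I.1 I.2 x| * |waveletDyadic ψ I.1 I.2 y|) := by
        rw [abs_mul, abs_mul]; ring
    _ ≤ |a I ω| * (C ^ 2 / d) :=
        mul_le_mul_of_nonneg_left hb (abs_nonneg _)
end

section
/- Under the same assumptions (a_I independent, uniformly subgaussian with factor ν, Σ_I E|a_I| < ∞, |ψ(x)| ≤ C(1+|x|)^{−1−ε}), for each x ≠ y and every t > 0, P(|Σ_{I∈𝒟}(a_I − E a_I)ψ_I(x)ψ_I(y)| > t) ≤ 2 exp(−t²/(4ν Σ_{I∈𝒟} |ψ_I(x)|²|ψ_I(y)|²)); consequently ‖K(x,y;·) − K̄(x,y)‖_{L²(Ω,P)} ≤ B/|x−y| for some constant B, where K(x,y;ω) = Σ_I a_I(ω)ψ_I(x)ψ_I(y) and K̄(x,y) = Σ_I (E a_I)ψ_I(x)ψ_I(y). -/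
set_option maxHeartbeats 2000000

open MeasureTheory ProbabilityTheory Real Filter
open scoped ENNReal NNReal

section Analytic

lemma rpow_anti {a b q : ℝ} (ha : 0 < a) (hab : a ≤ b) (hq : 0 ≤ q) :
    b ^ (-q) ≤ a ^ (-q) := by
  rw [Real.rpow_neg (ha.le.trans hab), Real.rpow_neg ha.le]
  exact inv_anti₀ (Real.rpow_pos_of_pos ha q) (Real.rpow_le_rpow ha.le hab hq)

lemma int_summable_bound {f : ℤ → ℝ} {g h : ℕ → ℝ}
    (hf0 : ∀ k, 0 ≤ f k) (hg : Summable g) (hh : Summable h)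
    (h1 : ∀ n : ℕ, f n ≤ g n) (h2 : ∀ n : ℕ, f (-(n + 1)) ≤ h n) :
    Summable f ∧ ∑' k, f k ≤ (∑' n, g n) + ∑' n, h n := by
  have s1 : Summable (fun n : ℕ => f n) := hg.of_nonneg_of_le (fun n => hf0 _) h1
  have s2 : Summable (fun n : ℕ => f (-(n + 1))) := hh.of_nonneg_of_le (fun n => hf0 _) h2
  refine ⟨Summable.of_nat_of_neg_add_one s1 s2, ?_⟩
  rw [tsum_of_nat_of_neg_add_one s1 s2]
  exact add_le_add (Summable.tsum_le_tsum h1 s1 hg) (Summable.tsum_le_tsum h2 s2 hh)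

lemma nat_decay_summable {q : ℝ} (hq : 1 < q) :
    Summable (fun n : ℕ => (1 + (n : ℝ)) ^ (-q)) := by
  have h0 : Summable (fun n : ℕ => ((n : ℝ)) ^ (-q)) :=
    Real.summable_nat_rpow.mpr (by linarith)
  have h1 := (summable_nat_add_iff 1).mpr h0
  refine h1.congr fun n => ?_
  push_cast
  rw [add_comm]

lemma nat_decay_one_le {q : ℝ} (hq : 1 < q) :
    (1 : ℝ) ≤ ∑' n : ℕ, (1 + (n : ℝ)) ^ (-q) := by
  have h := Summable.le_tsum (nat_decay_summable hq) 0 (fun j _ => by positivity)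
  simpa using h

lemma int_decay {q : ℝ} (hq : 1 < q) :
    Summable (fun k : ℤ => (1 + |(k : ℝ)|) ^ (-q)) ∧
      ∑' k : ℤ, (1 + |(k : ℝ)|) ^ (-q) ≤ 2 * ∑' n : ℕ, (1 + (n : ℝ)) ^ (-q) := by
  have hb := nat_decay_summable hq
  have h := int_summable_bound (f := fun k : ℤ => (1 + |(k : ℝ)|) ^ (-q))
    (g := fun n => (1 + (n : ℝ)) ^ (-q)) (h := fun n => (1 + (n : ℝ)) ^ (-q))
    (fun k => by positivity) hb hb
    (fun n => by norm_num)
    (fun n => by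
      push_cast
      rw [abs_neg, abs_of_nonneg (by positivity : (0:ℝ) ≤ (n:ℝ) + 1)]
      exact rpow_anti (by positivity) (by linarith) (by linarith))
  refine ⟨h.1, h.2.trans_eq (by ring)⟩

lemma int_decay_translate {q : ℝ} (hq : 1 < q) (u : ℝ) :
    Summable (fun k : ℤ => (1 + |u - (k : ℝ)|) ^ (-q)) ∧
      ∑' k : ℤ, (1 + |u - (k : ℝ)|) ^ (-q)
        ≤ (2 : ℝ) ^ q * (2 * ∑' n : ℕ, (1 + (n : ℝ)) ^ (-q)) := by
  obtain ⟨hs, hb⟩ := int_decay hq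
  set m : ℤ := ⌊u⌋ with hm
  have key : ∀ k : ℤ, (1 + |u - (k : ℝ)|) ^ (-q)
      ≤ (2 : ℝ) ^ q * (1 + |((k - m : ℤ) : ℝ)|) ^ (-q) := by
    intro k
    have hum : |u - (m : ℝ)| ≤ 1 := by
      rw [abs_of_nonneg (by linarith [Int.floor_le u])]
      have := Int.lt_floor_add_one u
      linarith
    have htri : |((k - m : ℤ) : ℝ)| ≤ |u - (k : ℝ)| + 1 := by
      push_cast
      calc |(k : ℝ) - m| ≤ |(k : ℝ) - u| + |u - m| := abs_sub_le _ u _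
        _ ≤ |u - (k : ℝ)| + 1 := by rw [abs_sub_comm]; linarith
    have hkey2 : (1 + |((k - m : ℤ) : ℝ)|) / 2 ≤ 1 + |u - (k : ℝ)| := by
      rcases le_or_gt (|((k - m : ℤ) : ℝ)|) 1 with hcase | hcase
      · have := abs_nonneg (u - (k : ℝ)); linarith
      · linarith [abs_nonneg (u - (k:ℝ))]
    have h1 : (1 + |u - (k : ℝ)|) ^ (-q) ≤ ((1 + |((k - m : ℤ) : ℝ)|) / 2) ^ (-q) :=
      rpow_anti (by positivity) hkey2 (by linarith)
    have h2 : ((1 + |((k - m : ℤ) : ℝ)|) / 2) ^ (-q)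
        = (2 : ℝ) ^ q * (1 + |((k - m : ℤ) : ℝ)|) ^ (-q) := by
      rw [Real.div_rpow (by positivity) (by norm_num), Real.rpow_neg (by norm_num : (0:ℝ) ≤ 2)]
      field_simp
    exact h1.trans h2.le
  have hs' : Summable (fun k : ℤ => (1 + |((k - m : ℤ) : ℝ)|) ^ (-q)) := by
    have := (Equiv.subRight m).summable_iff
      (f := fun k : ℤ => (1 + |(k : ℝ)|) ^ (-q))
    exact this.mpr hs
  have ht' : ∑' k : ℤ, (1 + |((k - m : ℤ) : ℝ)|) ^ (-q) = ∑' k : ℤ, (1 + |(k : ℝ)|) ^ (-q) :=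
    (Equiv.subRight m).tsum_eq (fun k : ℤ => (1 + |(k : ℝ)|) ^ (-q))
  have hsf : Summable (fun k : ℤ => (1 + |u - (k : ℝ)|) ^ (-q)) :=
    Summable.of_nonneg_of_le (fun k => by positivity) key (hs'.mul_left _)
  refine ⟨hsf, ?_⟩
  calc ∑' k : ℤ, (1 + |u - (k : ℝ)|) ^ (-q)
      ≤ ∑' k : ℤ, (2 : ℝ) ^ q * (1 + |((k - m : ℤ) : ℝ)|) ^ (-q) :=
        Summable.tsum_le_tsum key hsf (hs'.mul_left _)
    _ = (2 : ℝ) ^ q * ∑' k : ℤ, (1 + |((k - m : ℤ) : ℝ)|) ^ (-q) := tsum_mul_left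
    _ = (2 : ℝ) ^ q * ∑' k : ℤ, (1 + |(k : ℝ)|) ^ (-q) := by rw [ht']
    _ ≤ (2 : ℝ) ^ q * (2 * ∑' n : ℕ, (1 + (n : ℝ)) ^ (-q)) := by
        have h2q : (0:ℝ) < (2:ℝ) ^ q := Real.rpow_pos_of_pos (by norm_num) q
        exact mul_le_mul_of_nonneg_left hb h2q.le

end Analytic

lemma pair_decay {q : ℝ} (hq : 1 < q) :
    ∃ K : ℝ, 0 < K ∧ ∀ u v : ℝ,
      Summable (fun k : ℤ => (1 + |u - (k : ℝ)|) ^ (-q) * (1 + |v - (k : ℝ)|) ^ (-q)) ∧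
      ∑' k : ℤ, (1 + |u - (k : ℝ)|) ^ (-q) * (1 + |v - (k : ℝ)|) ^ (-q)
        ≤ K * (1 + |u - v|) ^ (-q) := by
  set T : ℝ := ∑' n : ℕ, (1 + (n : ℝ)) ^ (-q) with hT
  have hT1 : (1:ℝ) ≤ T := nat_decay_one_le hq
  refine ⟨(2:ℝ) ^ q * (2 * ((2:ℝ) ^ q * (2 * T))), by positivity, ?_⟩
  intro u v
  obtain ⟨hsu, hbu⟩ := int_decay_translate hq u
  obtain ⟨hsv, hbv⟩ := int_decay_translate hq v
  set A : ℤ → ℝ := fun k => (1 + |u - (k : ℝ)|) ^ (-q) with hA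
  set B : ℤ → ℝ := fun k => (1 + |v - (k : ℝ)|) ^ (-q) with hB
  have hA0 : ∀ k, 0 ≤ A k := fun k => by positivity
  have hB0 : ∀ k, 0 ≤ B k := fun k => by positivity
  have hA1 : ∀ k, A k ≤ 1 := fun k => Real.rpow_le_one_of_one_le_of_nonpos
    (le_add_of_nonneg_right (abs_nonneg _)) (by linarith)
  have hB1 : ∀ k, B k ≤ 1 := fun k => Real.rpow_le_one_of_one_le_of_nonpos
    (le_add_of_nonneg_right (abs_nonneg _)) (by linarith)
  have hhalf : ∀ d : ℝ, 0 ≤ d → ((1 + d) / 2) ^ (-q) ≤ (2:ℝ) ^ q * (1 + d) ^ (-q) := by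
    intro d hd
    rw [Real.div_rpow (by positivity) (by norm_num), Real.rpow_neg (by norm_num : (0:ℝ) ≤ 2)]
    rw [div_eq_mul_inv, inv_inv]
    ring_nf
    exact le_refl _
  have key : ∀ k : ℤ, A k * B k
      ≤ ((2:ℝ) ^ q * (1 + |u - v|) ^ (-q)) * (A k + B k) := by
    intro k
    have htri : |u - v| ≤ |u - (k:ℝ)| + |v - (k:ℝ)| := by
      calc |u - v| ≤ |u - (k:ℝ)| + |(k:ℝ) - v| := abs_sub_le _ _ _
        _ = |u - (k:ℝ)| + |v - (k:ℝ)| := by rw [abs_sub_comm ((k:ℝ)) v]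
    have hcase : |u - v| / 2 ≤ |u - (k:ℝ)| ∨ |u - v| / 2 ≤ |v - (k:ℝ)| := by
      by_contra hcon
      push_neg at hcon
      obtain ⟨h1, h2⟩ := hcon
      linarith
    have hd0 : (0:ℝ) ≤ |u - v| := abs_nonneg _
    rcases hcase with hcase | hcase
    · have h1 : A k ≤ (2:ℝ) ^ q * (1 + |u - v|) ^ (-q) := by
        have : (1 + |u - v|) / 2 ≤ 1 + |u - (k:ℝ)| := by linarith
        exact (rpow_anti (by positivity) this (by linarith)).trans (hhalf _ hd0)
      calc A k * B k ≤ ((2:ℝ) ^ q * (1 + |u - v|) ^ (-q)) * B k :=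
            mul_le_mul_of_nonneg_right h1 (hB0 k)
        _ ≤ ((2:ℝ) ^ q * (1 + |u - v|) ^ (-q)) * (A k + B k) := by
            have := hA0 k; have h2q : (0:ℝ) < (2:ℝ)^q := Real.rpow_pos_of_pos (by norm_num) q
            have hp : (0:ℝ) ≤ (2:ℝ) ^ q * (1 + |u - v|) ^ (-q) := by positivity
            nlinarith
    · have h1 : B k ≤ (2:ℝ) ^ q * (1 + |u - v|) ^ (-q) := by
        have : (1 + |u - v|) / 2 ≤ 1 + |v - (k:ℝ)| := by linarith
        exact (rpow_anti (by positivity) this (by linarith)).trans (hhalf _ hd0)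
      calc A k * B k ≤ A k * ((2:ℝ) ^ q * (1 + |u - v|) ^ (-q)) :=
            mul_le_mul_of_nonneg_left h1 (hA0 k)
        _ ≤ ((2:ℝ) ^ q * (1 + |u - v|) ^ (-q)) * (A k + B k) := by
            have := hB0 k; have := hA0 k
            have hp : (0:ℝ) ≤ (2:ℝ) ^ q * (1 + |u - v|) ^ (-q) := by positivity
            nlinarith
  have hsumAB : Summable (fun k : ℤ => ((2:ℝ) ^ q * (1 + |u - v|) ^ (-q)) * (A k + B k)) :=
    ((hsu.add hsv).mul_left _)
  have hsf : Summable (fun k : ℤ => A k * B k) :=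
    Summable.of_nonneg_of_le (fun k => mul_nonneg (hA0 k) (hB0 k)) key hsumAB
  refine ⟨hsf, ?_⟩
  calc ∑' k : ℤ, A k * B k ≤ ∑' k : ℤ, ((2:ℝ) ^ q * (1 + |u - v|) ^ (-q)) * (A k + B k) :=
        Summable.tsum_le_tsum key hsf hsumAB
    _ = ((2:ℝ) ^ q * (1 + |u - v|) ^ (-q)) * (∑' k : ℤ, (A k + B k)) := tsum_mul_left
    _ = ((2:ℝ) ^ q * (1 + |u - v|) ^ (-q)) * ((∑' k, A k) + ∑' k, B k) := by
        rw [Summable.tsum_add hsu hsv]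
    _ ≤ ((2:ℝ) ^ q * (1 + |u - v|) ^ (-q)) * ((2:ℝ) ^ q * (2 * T) + (2:ℝ) ^ q * (2 * T)) := by
        have hp : (0:ℝ) ≤ (2:ℝ) ^ q * (1 + |u - v|) ^ (-q) := by positivity
        exact mul_le_mul_of_nonneg_left (add_le_add hbu hbv) hp
    _ = (2:ℝ) ^ q * (2 * ((2:ℝ) ^ q * (2 * T))) * (1 + |u - v|) ^ (-q) := by ring

lemma zpow_decay {q : ℝ} (hq : 2 < q) :
    ∃ M : ℝ, 0 < M ∧ ∀ D : ℝ, 0 < D →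
      Summable (fun j : ℤ => ((2:ℝ) ^ j) ^ 2 * (1 + (2:ℝ) ^ j * D) ^ (-q)) ∧
      ∑' j : ℤ, ((2:ℝ) ^ j) ^ 2 * (1 + (2:ℝ) ^ j * D) ^ (-q) ≤ M / D ^ 2 := by
  set β : ℝ := (2:ℝ) ^ (2 - q) with hβ
  have hβ0 : 0 < β := Real.rpow_pos_of_pos (by norm_num) _
  have hβ1 : β < 1 := Real.rpow_lt_one_of_one_lt_of_neg (by norm_num) (by linarith)
  set M : ℝ := (2:ℝ) ^ (q - 2) * (1 - β)⁻¹ + 2 with hM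
  have hM0 : 0 < M := by
    rw [hM]
    have h1 : (0:ℝ) < (1 - β)⁻¹ := by
      have : (0:ℝ) < 1 - β := by linarith
      positivity
    have h2 : (0:ℝ) < (2:ℝ) ^ (q - 2) := Real.rpow_pos_of_pos (by norm_num) _
    nlinarith
  refine ⟨M, hM0, ?_⟩
  intro D hD
  obtain ⟨n, hn⟩ := exists_mem_Ico_zpow (x := 1 / D) (y := (2:ℝ)) (by positivity) (by norm_num)
  obtain ⟨hn1, hn2⟩ := hn
  set r : ℝ := (2:ℝ) ^ n * D with hr
  have hr0 : 0 < r := by positivity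
  have hr1 : r ≤ 1 := by
    rw [hr]
    calc (2:ℝ) ^ n * D ≤ (1 / D) * D := mul_le_mul_of_nonneg_right hn1 hD.le
      _ = 1 := by field_simp
  have hr2 : 1 < 2 * r := by
    have : 1 / D < (2:ℝ) ^ (n + 1) := hn2
    have h2 : (2:ℝ) ^ (n+1) = 2 * (2:ℝ)^n := by
      rw [zpow_add₀ (by norm_num : (2:ℝ) ≠ 0), zpow_one]; ring
    calc 1 = (1 / D) * D := by field_simp
      _ < (2:ℝ)^(n+1) * D := mul_lt_mul_of_pos_right this hD
      _ = 2 * r := by rw [h2, hr]; ring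
  -- the function and its translate
  set f : ℤ → ℝ := fun j => ((2:ℝ) ^ j) ^ 2 * (1 + (2:ℝ) ^ j * D) ^ (-q) with hf
  set F : ℤ → ℝ := fun i => f (i + n) with hF
  have hf0 : ∀ j, 0 ≤ f j := fun j => by positivity
  have hFval : ∀ i : ℤ, F i = (1 / D ^ 2) * ((2:ℝ) ^ i * r) ^ 2 * (1 + (2:ℝ) ^ i * r) ^ (-q) := by
    intro i
    have h2n : (2:ℝ) ^ (i + n) = (2:ℝ) ^ i * (2:ℝ) ^ n := zpow_add₀ (by norm_num) i n
    have hDn : (2:ℝ) ^ n = r / D := by rw [hr]; field_simp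
    simp only [hF, hf, h2n]
    rw [hDn]
    have : (2:ℝ) ^ i * (r / D) * D = (2:ℝ) ^ i * r := by field_simp
    rw [this]
    field_simp
    try ring
  -- bounds for F on nonneg and neg indices
  have hFpos : ∀ m : ℕ, F m ≤ (1 / D ^ 2) * ((2:ℝ) ^ (q - 2) * β ^ m) := by
    intro m
    rw [hFval m]
    have hzp : ((2:ℝ) ^ (m:ℤ)) = (2:ℝ) ^ (m:ℕ) := by
      rw [zpow_natCast]
    set s : ℝ := (2:ℝ) ^ (m:ℤ) * r with hs
    have hs0 : 0 < s := by positivity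
    have hs1 : (2:ℝ) ^ (m:ℕ) / 2 ≤ s := by
      rw [hs, hzp]
      have : (2:ℝ) ^ (m:ℕ) / 2 = (2:ℝ)^(m:ℕ) * (1/2) := by ring
      rw [this]
      apply mul_le_mul_of_nonneg_left _ (by positivity)
      linarith
    have hb1 : (1 + s) ^ (-q) ≤ s ^ (-q) := rpow_anti hs0 (by linarith) (by linarith)
    have hstep : s ^ 2 * (1 + s) ^ (-q) ≤ s ^ (2 - q) := by
      have h1 : s ^ 2 * (1 + s) ^ (-q) ≤ s ^ 2 * s ^ (-q) :=
        mul_le_mul_of_nonneg_left hb1 (by positivity)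
      have h2 : s ^ 2 * s ^ (-q) = s ^ (2 - q) := by
        rw [← Real.rpow_natCast s 2, ← Real.rpow_add hs0]
        norm_num [sub_eq_add_neg]
      linarith
    have hmono : s ^ (2 - q) ≤ ((2:ℝ) ^ (m:ℕ) / 2) ^ (2 - q) := by
      have := rpow_anti (q := q - 2) (by positivity : (0:ℝ) < (2:ℝ)^(m:ℕ)/2) hs1 (by linarith)
      simpa [neg_sub] using this
    have hval : ((2:ℝ) ^ (m:ℕ) / 2) ^ (2 - q) = (2:ℝ) ^ (q - 2) * β ^ m := by
      rw [Real.div_rpow (by positivity) (by norm_num)]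
      rw [← Real.rpow_natCast (2:ℝ) m, ← Real.rpow_mul (by norm_num : (0:ℝ) ≤ 2)]
      rw [hβ, ← Real.rpow_natCast ((2:ℝ)^(2-q)) m, ← Real.rpow_mul (by norm_num : (0:ℝ) ≤ 2)]
      rw [div_eq_mul_inv, ← Real.rpow_neg (by norm_num : (0:ℝ) ≤ 2)]
      rw [← Real.rpow_add (by norm_num : (0:ℝ) < 2), ← Real.rpow_add (by norm_num : (0:ℝ) < 2)]
      ring_nf
    calc (1 / D ^ 2) * s ^ 2 * (1 + s) ^ (-q)
        = (1 / D ^ 2) * (s ^ 2 * (1 + s) ^ (-q)) := by ring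
      _ ≤ (1 / D ^ 2) * s ^ (2 - q) := by
          exact mul_le_mul_of_nonneg_left hstep (by positivity)
      _ ≤ (1 / D ^ 2) * ((2:ℝ) ^ (m:ℕ) / 2) ^ (2 - q) := by
          exact mul_le_mul_of_nonneg_left hmono (by positivity)
      _ = (1 / D ^ 2) * ((2:ℝ) ^ (q - 2) * β ^ m) := by rw [hval]
  have hFneg : ∀ m : ℕ, F (-(m + 1)) ≤ (1 / D ^ 2) * ((1/4:ℝ) ^ m) := by
    intro m
    rw [hFval]
    set s : ℝ := (2:ℝ) ^ (-(m+1:ℤ)) * r with hs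
    have hs0 : 0 < s := by positivity
    have hsle : s ≤ (1/2:ℝ) ^ (m+1:ℕ) := by
      rw [hs]
      have h1 : (2:ℝ) ^ (-(m+1:ℤ)) = ((1:ℝ)/2) ^ (m+1:ℕ) := by
        rw [zpow_neg, one_div, inv_pow]
        norm_cast
      rw [h1]
      calc ((1:ℝ)/2) ^ (m+1:ℕ) * r ≤ ((1:ℝ)/2) ^ (m+1:ℕ) * 1 :=
            mul_le_mul_of_nonneg_left hr1 (by positivity)
        _ = ((1:ℝ)/2) ^ (m+1:ℕ) := by ring
    have hrp : (1 + s) ^ (-q) ≤ 1 :=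
      Real.rpow_le_one_of_one_le_of_nonpos (by linarith) (by linarith)
    have hsq : s ^ 2 ≤ (1/4:ℝ) ^ m := by
      have h1 : s ^ 2 ≤ (((1:ℝ)/2) ^ (m+1:ℕ)) ^ 2 := by
        apply pow_le_pow_left₀ hs0.le hsle
      have h2 : (((1:ℝ)/2) ^ (m+1:ℕ)) ^ 2 = (1/4:ℝ) ^ (m+1) := by
        rw [← pow_mul, mul_comm, pow_mul]
        norm_num
      have h3 : (1/4:ℝ) ^ (m+1) ≤ (1/4:ℝ) ^ m := by
        apply pow_le_pow_of_le_one (by norm_num) (by norm_num)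
        omega
      linarith
    calc (1 / D ^ 2) * s ^ 2 * (1 + s) ^ (-q) ≤ (1 / D ^ 2) * s ^ 2 * 1 := by
          apply mul_le_mul_of_nonneg_left hrp (by positivity)
      _ = (1 / D ^ 2) * s ^ 2 := by ring
      _ ≤ (1 / D ^ 2) * ((1/4:ℝ) ^ m) := mul_le_mul_of_nonneg_left hsq (by positivity)
  have hgsum : Summable (fun m : ℕ => (1 / D ^ 2) * ((2:ℝ) ^ (q - 2) * β ^ m)) :=
    ((summable_geometric_of_lt_one hβ0.le hβ1).mul_left _).mul_left _
  have hhsum : Summable (fun m : ℕ => (1 / D ^ 2) * ((1/4:ℝ) ^ m)) :=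
    (summable_geometric_of_lt_one (by norm_num) (by norm_num)).mul_left _
  have hib := int_summable_bound (f := F) (fun i => hf0 _) hgsum hhsum hFpos hFneg
  have hFs : Summable F := hib.1
  have hsf : Summable f := by
    have := (Equiv.addRight n).summable_iff (f := f)
    exact this.mp hFs
  refine ⟨hsf, ?_⟩
  have htsum_eq : ∑' j : ℤ, f j = ∑' i : ℤ, F i := by
    rw [← (Equiv.addRight n).tsum_eq f]
    rfl
  rw [htsum_eq]
  have h1 : ∑' m : ℕ, (1 / D ^ 2) * ((2:ℝ) ^ (q - 2) * β ^ m)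
      = (1 / D ^ 2) * ((2:ℝ) ^ (q - 2) * (1 - β)⁻¹) := by
    rw [tsum_mul_left, tsum_mul_left, tsum_geometric_of_lt_one hβ0.le hβ1]
  have h2 : ∑' m : ℕ, (1 / D ^ 2) * ((1/4:ℝ) ^ m) = (1 / D ^ 2) * (4/3 : ℝ) := by
    rw [tsum_mul_left, tsum_geometric_of_lt_one (by norm_num) (by norm_num)]
    norm_num
  calc ∑' i : ℤ, F i ≤ _ + _ := hib.2
    _ = (1 / D ^ 2) * ((2:ℝ) ^ (q - 2) * (1 - β)⁻¹) + (1 / D ^ 2) * (4/3 : ℝ) := by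
        rw [h1, h2]
    _ ≤ M / D ^ 2 := by
        rw [hM]
        have h4 : (4/3 : ℝ) ≤ 2 := by norm_num
        have : (1 / D ^ 2) * ((2:ℝ) ^ (q - 2) * (1 - β)⁻¹) + (1 / D ^ 2) * (4/3:ℝ)
            ≤ (1 / D ^ 2) * ((2:ℝ) ^ (q - 2) * (1 - β)⁻¹ + 2) := by
          have hD2 : (0:ℝ) ≤ 1 / D ^ 2 := by positivity
          nlinarith
        calc _ ≤ (1 / D ^ 2) * ((2:ℝ) ^ (q - 2) * (1 - β)⁻¹ + 2) := this
          _ = ((2:ℝ) ^ (q - 2) * (1 - β)⁻¹ + 2) / D ^ 2 := by ring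

lemma kernel_bound (ψ : ℝ → ℝ) (C ε : ℝ) (hC : 0 < C) (hε : 0 < ε)
    (hψ : ∀ x : ℝ, |ψ x| ≤ C * (1 + |x|) ^ (-(1 + ε))) :
    ∃ C₂ : ℝ, 0 < C₂ ∧ ∀ x y : ℝ, x ≠ y →
      Summable (fun I : ℤ × ℤ =>
        (waveletDyadic ψ I.1 I.2 x) ^ 2 * (waveletDyadic ψ I.1 I.2 y) ^ 2) ∧
      ∑' I : ℤ × ℤ, (waveletDyadic ψ I.1 I.2 x) ^ 2 * (waveletDyadic ψ I.1 I.2 y) ^ 2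
        ≤ C₂ / |x - y| ^ 2 := by
  set q : ℝ := 2 + 2 * ε with hq
  have hq1 : 1 < q := by rw [hq]; linarith
  have hq2 : 2 < q := by rw [hq]; linarith
  obtain ⟨K, hK, hpair⟩ := pair_decay hq1
  obtain ⟨M, hM, hzpow⟩ := zpow_decay hq2
  refine ⟨C ^ 4 * K * M, by positivity, ?_⟩
  intro x y hxy
  set D : ℝ := |x - y| with hD
  have hD0 : 0 < D := abs_pos.mpr (sub_ne_zero.mpr hxy)
  -- pointwise square bound for the wavelet
  have hwsq : ∀ (z : ℝ) (j k : ℤ), (waveletDyadic ψ j k z) ^ 2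
      ≤ (2:ℝ) ^ j * (C ^ 2 * (1 + |(2:ℝ) ^ j * z - k|) ^ (-q)) := by
    intro z j k
    have h2j : ((2:ℝ) ^ ((j:ℝ)/2)) ^ 2 = (2:ℝ) ^ j := by
      rw [sq, ← Real.rpow_add (by norm_num : (0:ℝ) < 2), add_halves, Real.rpow_intCast]
    have hψ2 : (ψ ((2:ℝ) ^ j * z - k)) ^ 2
        ≤ C ^ 2 * (1 + |(2:ℝ) ^ j * z - k|) ^ (-q) := by
      set t : ℝ := (2:ℝ) ^ j * z - k with ht
      have h1 : (ψ t) ^ 2 = |ψ t| ^ 2 := (sq_abs _).symm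
      have h2 : |ψ t| ^ 2 ≤ (C * (1 + |t|) ^ (-(1 + ε))) ^ 2 :=
        pow_le_pow_left₀ (abs_nonneg _) (hψ t) 2
      have h3 : (C * (1 + |t|) ^ (-(1 + ε))) ^ 2 = C ^ 2 * (1 + |t|) ^ (-q) := by
        rw [mul_pow]
        congr 1
        rw [← Real.rpow_natCast ((1 + |t|) ^ (-(1 + ε))) 2, ← Real.rpow_mul (by positivity)]
        congr 1
        rw [hq]; push_cast; ring
      linarith
    have hexp : waveletDyadic ψ j k z ^ 2
        = ((2:ℝ) ^ ((j:ℝ)/2)) ^ 2 * (ψ ((2:ℝ) ^ j * z - k)) ^ 2 := by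
      rw [waveletDyadic, mul_pow]
    rw [hexp, h2j]
    exact mul_le_mul_of_nonneg_left hψ2 (by positivity)
  -- the dominating function
  set g : ℤ × ℤ → ℝ := fun I => C ^ 4 * (((2:ℝ) ^ I.1) ^ 2 *
      ((1 + |(2:ℝ) ^ I.1 * x - I.2|) ^ (-q) * (1 + |(2:ℝ) ^ I.1 * y - I.2|) ^ (-q))) with hg
  have hfg : ∀ I : ℤ × ℤ, (waveletDyadic ψ I.1 I.2 x) ^ 2 * (waveletDyadic ψ I.1 I.2 y) ^ 2
      ≤ g I := by
    rintro ⟨j, k⟩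
    have h1 := hwsq x j k
    have h2 := hwsq y j k
    have h10 : (0:ℝ) ≤ (waveletDyadic ψ j k x) ^ 2 := sq_nonneg _
    have h20 : (0:ℝ) ≤ (waveletDyadic ψ j k y) ^ 2 := sq_nonneg _
    have hb1 : (0:ℝ) ≤ (2:ℝ) ^ j * (C ^ 2 * (1 + |(2:ℝ) ^ j * x - k|) ^ (-q)) := by positivity
    calc (waveletDyadic ψ j k x) ^ 2 * (waveletDyadic ψ j k y) ^ 2
        ≤ ((2:ℝ) ^ j * (C ^ 2 * (1 + |(2:ℝ) ^ j * x - k|) ^ (-q))) *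
          ((2:ℝ) ^ j * (C ^ 2 * (1 + |(2:ℝ) ^ j * y - k|) ^ (-q))) :=
          mul_le_mul h1 h2 h20 hb1
      _ = g (j, k) := by rw [hg]; ring
  have hg0 : ∀ I : ℤ × ℤ, 0 ≤ g I := fun I => by
    have : (0:ℝ) ≤ (1 + |(2:ℝ) ^ I.1 * x - I.2|) ^ (-q) := by positivity
    rw [hg]; positivity
  -- inner sums of g
  have hginner : ∀ j : ℤ, Summable (fun k : ℤ => g (j, k)) ∧
      ∑' k : ℤ, g (j, k) ≤ (C ^ 4 * K) * (((2:ℝ) ^ j) ^ 2 * (1 + (2:ℝ) ^ j * D) ^ (-q)) := by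
    intro j
    obtain ⟨hsk, hbk⟩ := hpair ((2:ℝ) ^ j * x) ((2:ℝ) ^ j * y)
    have habs : |(2:ℝ) ^ j * x - (2:ℝ) ^ j * y| = (2:ℝ) ^ j * D := by
      rw [← mul_sub, abs_mul, abs_of_pos (zpow_pos (by norm_num : (0:ℝ) < 2) j), hD]
    have hgk : (fun k : ℤ => g (j, k)) = fun k : ℤ => (C ^ 4 * ((2:ℝ) ^ j) ^ 2) *
        ((1 + |(2:ℝ) ^ j * x - k|) ^ (-q) * (1 + |(2:ℝ) ^ j * y - k|) ^ (-q)) := by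
      funext k
      rw [hg]
      ring
    constructor
    · rw [hgk]
      exact hsk.mul_left _
    · calc ∑' k : ℤ, g (j, k)
          = (C ^ 4 * ((2:ℝ) ^ j) ^ 2) * ∑' k : ℤ,
            (1 + |(2:ℝ) ^ j * x - k|) ^ (-q) * (1 + |(2:ℝ) ^ j * y - k|) ^ (-q) := by
            rw [← tsum_mul_left]
            apply tsum_congr
            intro k
            rw [hg]
            ring
        _ ≤ (C ^ 4 * ((2:ℝ) ^ j) ^ 2) * (K * (1 + |(2:ℝ) ^ j * x - (2:ℝ) ^ j * y|) ^ (-q)) := by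
            apply mul_le_mul_of_nonneg_left hbk (by positivity)
        _ = (C ^ 4 * K) * (((2:ℝ) ^ j) ^ 2 * (1 + (2:ℝ) ^ j * D) ^ (-q)) := by
            rw [habs]; ring
  obtain ⟨hsj, hbj⟩ := hzpow D hD0
  have hgouter : Summable (fun j : ℤ => ∑' k : ℤ, g (j, k)) := by
    apply Summable.of_nonneg_of_le (fun j => tsum_nonneg (fun k => hg0 (j, k)))
      (fun j => (hginner j).2)
    exact hsj.mul_left _
  have hgsum : Summable g := by
    rw [summable_prod_of_nonneg hg0]
    exact ⟨fun j => (hginner j).1, hgouter⟩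
  have hfsum : Summable (fun I : ℤ × ℤ =>
      (waveletDyadic ψ I.1 I.2 x) ^ 2 * (waveletDyadic ψ I.1 I.2 y) ^ 2) :=
    Summable.of_nonneg_of_le (fun I => by positivity) hfg hgsum
  refine ⟨hfsum, ?_⟩
  calc ∑' I : ℤ × ℤ, (waveletDyadic ψ I.1 I.2 x) ^ 2 * (waveletDyadic ψ I.1 I.2 y) ^ 2
      ≤ ∑' I : ℤ × ℤ, g I := Summable.tsum_le_tsum hfg hfsum hgsum
    _ = ∑' j : ℤ, ∑' k : ℤ, g (j, k) := Summable.tsum_prod' hgsum (fun j => (hginner j).1)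
    _ ≤ ∑' j : ℤ, (C ^ 4 * K) * (((2:ℝ) ^ j) ^ 2 * (1 + (2:ℝ) ^ j * D) ^ (-q)) := by
        apply Summable.tsum_le_tsum (fun j => (hginner j).2) hgouter
        exact (hsj.mul_left _)
    _ = (C ^ 4 * K) * ∑' j : ℤ, ((2:ℝ) ^ j) ^ 2 * (1 + (2:ℝ) ^ j * D) ^ (-q) := tsum_mul_left
    _ ≤ (C ^ 4 * K) * (M / D ^ 2) := mul_le_mul_of_nonneg_left hbj (by positivity)
    _ = C ^ 4 * K * M / D ^ 2 := by ring

lemma sq_le_four_exp (y : ℝ) : y ^ 2 ≤ 4 * (Real.exp y + Real.exp (-y)) := by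
  have e1 : Real.exp (|y| / 2) ^ 2 = Real.exp |y| := by
    rw [sq, ← Real.exp_add, add_halves]
  have e2 : Real.exp |y| ≤ Real.exp y + Real.exp (-y) := by
    rcases abs_cases y with ⟨h, _⟩ | ⟨h, _⟩ <;> rw [h] <;>
      linarith [Real.exp_pos (-y), Real.exp_pos y]
  have e3 : |y| / 2 + 1 ≤ Real.exp (|y| / 2) := by
    have := Real.add_one_le_exp (|y| / 2)
    linarith
  have e4 : (|y| / 2 + 1) ^ 2 ≤ Real.exp (|y| / 2) ^ 2 := by
    apply pow_le_pow_left₀ (by positivity) e3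
  have e5 : y ^ 2 / 4 ≤ (|y| / 2 + 1) ^ 2 := by
    have h := sq_abs y
    nlinarith [abs_nonneg y]
  nlinarith

lemma iIndepFun_of_ae_eq {Ω : Type*} {mΩ : MeasurableSpace Ω} {μ : Measure Ω} {ι : Type*}
    {f g : ι → Ω → ℝ} (hf : iIndepFun f μ)
    (hfg : ∀ i, f i =ᵐ[μ] g i) : iIndepFun g μ := by
  rw [iIndepFun_iff_measure_inter_preimage_eq_mul] at hf ⊢
  intro S sets hsets
  have hae : ∀ᵐ ω ∂μ, ∀ i ∈ S, f i ω = g i ω :=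
    (ae_ball_iff S.countable_toSet).mpr (fun i _ => hfg i)
  have h1 : μ (⋂ i ∈ S, g i ⁻¹' sets i) = μ (⋂ i ∈ S, f i ⁻¹' sets i) := by
    apply measure_congr
    rw [Filter.eventuallyEq_set]
    filter_upwards [hae] with ω hω
    simp only [Set.mem_iInter, Set.mem_preimage]
    constructor
    · intro h i hi; rw [hω i hi]; exact h i hi
    · intro h i hi; rw [← hω i hi]; exact h i hi
  have h2 : ∀ i ∈ S, μ (g i ⁻¹' sets i) = μ (f i ⁻¹' sets i) := by
    intro i hi
    apply measure_congr
    rw [Filter.eventuallyEq_set]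
    filter_upwards [hfg i] with ω hω
    simp [Set.mem_preimage, hω]
  rw [h1, hf S hsets]
  exact (Finset.prod_congr rfl h2).symm

lemma tail_bound_of_lintegral_exp {Ω : Type*} [MeasureSpace Ω]
    [IsProbabilityMeasure (ℙ : Measure Ω)]
    {X : Ω → ℝ} (hX : AEStronglyMeasurable X ℙ) {K : ℝ} (hK : 0 < K)
    (hmgf : ∀ l : ℝ, ∫⁻ ω, ENNReal.ofReal (Real.exp (l * X ω)) ∂ℙ
      ≤ ENNReal.ofReal (Real.exp (l ^ 2 * K / 2)))
    {t : ℝ} (ht : 0 < t) :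
    ℙ {ω | t < |X ω|} ≤ ENNReal.ofReal (2 * Real.exp (-t ^ 2 / (2 * K))) := by
  have claim : ∀ Y : Ω → ℝ, AEStronglyMeasurable Y ℙ →
      (∀ l : ℝ, ∫⁻ ω, ENNReal.ofReal (Real.exp (l * Y ω)) ∂ℙ
        ≤ ENNReal.ofReal (Real.exp (l ^ 2 * K / 2))) →
      ℙ {ω | t < Y ω} ≤ ENNReal.ofReal (Real.exp (-t ^ 2 / (2 * K))) := by
    intro Y hY hm
    set l : ℝ := t / K with hl
    have hl0 : 0 < l := by positivity
    set fε : ℝ≥0∞ := ENNReal.ofReal (Real.exp (l * t)) with hfε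
    have hfε0 : fε ≠ 0 := by
      simp [hfε, ENNReal.ofReal_eq_zero, not_le, Real.exp_pos]
    have hfεtop : fε ≠ ⊤ := ENNReal.ofReal_ne_top
    have hsub : {ω | t < Y ω} ⊆ {ω | fε ≤ ENNReal.ofReal (Real.exp (l * Y ω))} := by
      intro ω hω
      simp only [Set.mem_setOf_eq] at hω ⊢
      apply ENNReal.ofReal_le_ofReal
      apply Real.exp_le_exp.mpr
      exact mul_le_mul_of_nonneg_left hω.le hl0.le
    have hmeas : AEMeasurable (fun ω => ENNReal.ofReal (Real.exp (l * Y ω))) ℙ := by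
      apply ENNReal.measurable_ofReal.comp_aemeasurable
      exact (Real.measurable_exp.comp_aemeasurable ((hY.aemeasurable).const_mul l))
    have hmarkov := mul_meas_ge_le_lintegral₀ hmeas fε
    have h1 : ℙ {ω | t < Y ω} ≤ ENNReal.ofReal (Real.exp (l ^ 2 * K / 2)) / fε := by
      rw [ENNReal.le_div_iff_mul_le (Or.inl hfε0) (Or.inl hfεtop)]
      calc ℙ {ω | t < Y ω} * fε = fε * ℙ {ω | t < Y ω} := mul_comm _ _
        _ ≤ fε * ℙ {ω | fε ≤ ENNReal.ofReal (Real.exp (l * Y ω))} := by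
            exact mul_le_mul_right (measure_mono hsub) fε
        _ ≤ ∫⁻ ω, ENNReal.ofReal (Real.exp (l * Y ω)) ∂ℙ := hmarkov
        _ ≤ ENNReal.ofReal (Real.exp (l ^ 2 * K / 2)) := hm l
    refine h1.trans ?_
    rw [hfε, ← ENNReal.ofReal_div_of_pos (Real.exp_pos _), ← Real.exp_sub]
    apply ENNReal.ofReal_le_ofReal
    apply Real.exp_le_exp.mpr
    rw [hl]
    have hK' : K ≠ 0 := hK.ne'
    field_simp
    norm_num
  have hXneg : AEStronglyMeasurable (fun ω => -X ω) ℙ := hX.neg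
  have hmneg : ∀ l : ℝ, ∫⁻ ω, ENNReal.ofReal (Real.exp (l * (fun ω => -X ω) ω)) ∂ℙ
      ≤ ENNReal.ofReal (Real.exp (l ^ 2 * K / 2)) := by
    intro l
    have : (fun ω => ENNReal.ofReal (Real.exp (l * -X ω)))
        = fun ω => ENNReal.ofReal (Real.exp ((-l) * X ω)) := by
      funext ω; ring_nf
    rw [show l ^ 2 = (-l) ^ 2 by ring]
    calc ∫⁻ ω, ENNReal.ofReal (Real.exp (l * -X ω)) ∂ℙ
        = ∫⁻ ω, ENNReal.ofReal (Real.exp ((-l) * X ω)) ∂ℙ := by rw [this]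
      _ ≤ _ := hmgf (-l)
  have hun : {ω | t < |X ω|} ⊆ {ω | t < X ω} ∪ {ω | t < -X ω} := by
    intro ω hω
    simp only [Set.mem_setOf_eq, Set.mem_union] at hω ⊢
    exact lt_abs.mp hω
  calc ℙ {ω | t < |X ω|} ≤ ℙ ({ω | t < X ω} ∪ {ω | t < -X ω}) := measure_mono hun
    _ ≤ ℙ {ω | t < X ω} + ℙ {ω | t < -X ω} := measure_union_le _ _
    _ ≤ ENNReal.ofReal (Real.exp (-t ^ 2 / (2 * K)))
        + ENNReal.ofReal (Real.exp (-t ^ 2 / (2 * K))) :=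
        add_le_add (claim X hX hmgf) (claim (fun ω => -X ω) hXneg hmneg)
    _ = ENNReal.ofReal (2 * Real.exp (-t ^ 2 / (2 * K))) := by
        rw [← ENNReal.ofReal_add (Real.exp_pos _).le (Real.exp_pos _).le]
        ring_nf

/-- Concentration of the random kernel about its mean kernel: the subgaussian tail bound
for `Σ_I (a_I - E a_I) ψ_I(x) ψ_I(y)` and the consequent Calderón–Zygmund size estimate
`‖K(x,y;·) - K̄(x,y)‖_{L²(Ω,P)} ≤ B / |x - y|`. -/
theorem random_wavelet_kernel_concentration
    {Ω : Type*} [MeasureSpace Ω] [IsProbabilityMeasure (ℙ : Measure Ω)]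
    (ψ : ℝ → ℝ) (C ε : ℝ) (hC : 0 < C) (hε : 0 < ε)
    (hψ : ∀ x : ℝ, |ψ x| ≤ C * (1 + |x|) ^ (-(1 + ε)))
    (a : ℤ × ℤ → Ω → ℝ) (ν : ℝ) (hν : 0 < ν)
    (hind : iIndepFun a ℙ)
    (hint : ∀ I, Integrable (a I) ℙ)
    (habs : Summable (fun I => ∫ ω, |a I ω| ∂ℙ))
    (hmgf : ∀ I, ∀ l : ℝ,
      Integrable (fun ω => exp (l * (a I ω - ∫ x, a I x ∂ℙ))) ℙ)
    (hsub : ∀ I, ∀ l : ℝ,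
      log (∫ ω, exp (l * (a I ω - ∫ x, a I x ∂ℙ)) ∂ℙ) ≤ l ^ 2 * ν / 2) :
    ∃ B : ℝ, 0 < B ∧ ∀ x y : ℝ, x ≠ y →
      (∀ t : ℝ, 0 < t →
        ℙ {ω | t < |∑' I : ℤ × ℤ,
            (a I ω - ∫ w, a I w ∂ℙ) * waveletDyadic ψ I.1 I.2 x * waveletDyadic ψ I.1 I.2 y|}
          ≤ ENNReal.ofReal (2 * exp (-t ^ 2 /
              (4 * ν * ∑' I : ℤ × ℤ,
                (waveletDyadic ψ I.1 I.2 x) ^ 2 * (waveletDyadic ψ I.1 I.2 y) ^ 2)))) ∧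
      eLpNorm (fun ω =>
          (∑' I : ℤ × ℤ, a I ω * waveletDyadic ψ I.1 I.2 x * waveletDyadic ψ I.1 I.2 y)
          - ∑' I : ℤ × ℤ,
              (∫ w, a I w ∂ℙ) * waveletDyadic ψ I.1 I.2 x * waveletDyadic ψ I.1 I.2 y) 2 ℙ
        ≤ ENNReal.ofReal (B / |x - y|) := by
  classical
  obtain ⟨C₂, hC₂, hker⟩ := kernel_bound ψ C ε hC hε hψ
  set ν' : ℝ := 8 * Real.exp (ν / 2) with hν'
  have hν'0 : 0 < ν' := by positivity
  set B : ℝ := Real.sqrt (ν' * C₂) + 1 with hB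
  set m : ℤ × ℤ → ℝ := fun I => ∫ w, a I w ∂ℙ with hm
  set b : ℤ × ℤ → Ω → ℝ := fun I => (hint I).1.mk (a I) with hb
  have hba : ∀ I, a I =ᵐ[ℙ] b I := fun I => (hint I).1.ae_eq_mk
  have hbmeas : ∀ I, Measurable (b I) := fun I => ((hint I).1.stronglyMeasurable_mk).measurable
  have hbint : ∀ I, Integrable (b I) ℙ := fun I => (hint I).congr (hba I)
  have hbm : ∀ I, ∫ ω, b I ω ∂ℙ = m I := fun I => (integral_congr_ae (hba I)).symm
  set Y : ℤ × ℤ → Ω → ℝ := fun I ω => b I ω - m I with hY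
  have hYmeas : ∀ I, Measurable (Y I) := fun I => (hbmeas I).sub measurable_const
  have hYint : ∀ I, Integrable (Y I) ℙ := fun I => (hbint I).sub (integrable_const _)
  have hEY : ∀ I, ∫ ω, Y I ω ∂ℙ = 0 := by
    intro I
    simp only [hY]
    rw [integral_sub (hbint I) (integrable_const _), hbm I, integral_const]
    simp
  have haY : ∀ I, (fun ω => a I ω - m I) =ᵐ[ℙ] Y I := by
    intro I
    filter_upwards [hba I] with ω h
    simp only [hY, h]
  have hmgfY : ∀ I, ∀ l : ℝ, Integrable (fun ω => Real.exp (l * Y I ω)) ℙ := by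
    intro I l
    refine (hmgf I l).congr ?_
    filter_upwards [haY I] with ω h
    simp only [← h]
    rfl
  have hsubY : ∀ I, ∀ l : ℝ, ∫ ω, Real.exp (l * Y I ω) ∂ℙ ≤ Real.exp (l ^ 2 * ν / 2) := by
    intro I l
    have h0 : ∫ ω, Real.exp (l * (a I ω - m I)) ∂ℙ = ∫ ω, Real.exp (l * Y I ω) ∂ℙ := by
      apply integral_congr_ae
      filter_upwards [haY I] with ω h
      simp only [← h]
    have hpos : 0 < ∫ ω, Real.exp (l * Y I ω) ∂ℙ := by
      have h1 : 0 < mgf (Y I) ℙ l := mgf_pos (hmgfY I l)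
      simpa [mgf] using h1
    have h2 := hsub I l
    rw [h0] at h2
    exact (Real.log_le_iff_le_exp hpos).mp h2
  have hY2int : ∀ I, Integrable (fun ω => (Y I ω) ^ 2) ℙ := by
    intro I
    have h1 : Integrable (fun ω => Real.exp (Y I ω)) ℙ := by
      have := hmgfY I 1
      simpa using this
    have h2 : Integrable (fun ω => Real.exp (-Y I ω)) ℙ := by
      have := hmgfY I (-1)
      simpa [neg_mul, one_mul] using this
    have h3 : Integrable (fun ω => 4 * (Real.exp (Y I ω) + Real.exp (-Y I ω))) ℙ :=
      (h1.add h2).const_mul 4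
    refine h3.mono' (((hYmeas I).pow_const 2).aestronglyMeasurable) ?_
    apply Eventually.of_forall
    intro ω
    rw [Real.norm_eq_abs, abs_of_nonneg (sq_nonneg _)]
    exact sq_le_four_exp _
  have hEY2 : ∀ I, ∫ ω, (Y I ω) ^ 2 ∂ℙ ≤ ν' := by
    intro I
    have h1 : Integrable (fun ω => Real.exp (Y I ω)) ℙ := by simpa using hmgfY I 1
    have h2 : Integrable (fun ω => Real.exp (-Y I ω)) ℙ := by
      simpa [neg_mul, one_mul] using hmgfY I (-1)
    have hb1 : ∫ ω, Real.exp (Y I ω) ∂ℙ ≤ Real.exp (ν / 2) := by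
      have := hsubY I 1
      simpa using this
    have hb2 : ∫ ω, Real.exp (-Y I ω) ∂ℙ ≤ Real.exp (ν / 2) := by
      have := hsubY I (-1)
      simpa [neg_mul, one_mul] using this
    calc ∫ ω, (Y I ω) ^ 2 ∂ℙ
        ≤ ∫ ω, 4 * (Real.exp (Y I ω) + Real.exp (-Y I ω)) ∂ℙ := by
          apply integral_mono (hY2int I) ((h1.add h2).const_mul 4)
          intro ω
          exact sq_le_four_exp _
      _ = 4 * ((∫ ω, Real.exp (Y I ω) ∂ℙ) + ∫ ω, Real.exp (-Y I ω) ∂ℙ) := by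
          rw [integral_const_mul, integral_add h1 h2]
      _ ≤ 4 * (Real.exp (ν / 2) + Real.exp (ν / 2)) := by
          apply mul_le_mul_of_nonneg_left (add_le_add hb1 hb2) (by norm_num)
      _ = ν' := by rw [hν']; ring
  have hYL2 : ∀ I, MemLp (Y I) 2 ℙ := by
    intro I
    refine (memLp_two_iff_integrable_sq ((hYmeas I).aestronglyMeasurable)).2 ?_
    exact (hY2int I).congr (Eventually.of_forall (fun ω => rfl))
  have hvarY : ∀ I, variance (Y I) ℙ ≤ ν' := by
    intro I
    rw [variance_eq_sub (hYL2 I)]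
    have h1 : ℙ[(Y I) ^ 2] = ∫ ω, (Y I ω) ^ 2 ∂ℙ := by
      apply integral_congr_ae
      apply Eventually.of_forall
      intro ω
      simp
    rw [h1]
    have := hEY2 I
    nlinarith [sq_nonneg (ℙ[Y I])]
  have hindb : iIndepFun b ℙ := iIndepFun_of_ae_eq hind hba
  -- exhaustion of ℤ × ℤ
  set F : ℕ → Finset (ℤ × ℤ) := fun n => Finset.Icc (-(n:ℤ), -(n:ℤ)) ((n:ℤ), (n:ℤ)) with hF
  have hFmono : Monotone F := by
    intro p q hpq
    apply Finset.Icc_subset_Icc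
    · simp only [Prod.le_def]
      constructor <;> · simp only [neg_le_neg_iff]; exact_mod_cast hpq
    · simp only [Prod.le_def]
      constructor <;> exact_mod_cast hpq
  have hFexh : ∀ I : ℤ × ℤ, ∃ n : ℕ, I ∈ F n := by
    intro I
    refine ⟨(|I.1| + |I.2|).toNat, ?_⟩
    have h1 : (((|I.1| + |I.2|).toNat : ℤ)) = |I.1| + |I.2| :=
      Int.toNat_of_nonneg (by positivity)
    simp only [hF, Finset.mem_Icc, Prod.le_def]
    rw [h1]
    have e1 := le_abs_self I.1
    have e2 := le_abs_self I.2
    have e3 := neg_abs_le I.1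
    have e4 := neg_abs_le I.2
    have e5 := abs_nonneg I.1
    have e6 := abs_nonneg I.2
    exact ⟨⟨by linarith, by linarith⟩, by linarith, by linarith⟩
  have hFtend : Tendsto F atTop atTop := tendsto_atTop_finset_of_monotone hFmono hFexh
  refine ⟨B, by positivity, ?_⟩
  intro x y hxy
  obtain ⟨hsq, hSle⟩ := hker x y hxy
  set D : ℝ := |x - y| with hD
  have hD0 : 0 < D := abs_pos.mpr (sub_ne_zero.mpr hxy)
  set c : ℤ × ℤ → ℝ := fun I => waveletDyadic ψ I.1 I.2 x * waveletDyadic ψ I.1 I.2 y with hc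
  set S : ℝ := ∑' I : ℤ × ℤ,
    (waveletDyadic ψ I.1 I.2 x) ^ 2 * (waveletDyadic ψ I.1 I.2 y) ^ 2 with hS
  have hsq' : Summable (fun I : ℤ × ℤ => c I ^ 2) :=
    hsq.congr (fun I => (mul_pow _ _ 2).symm)
  have hS0 : 0 ≤ S := by
    rw [hS]; exact tsum_nonneg (fun I => by positivity)
  have hSc : ∑' I : ℤ × ℤ, c I ^ 2 = S := by
    rw [hS]; exact tsum_congr (fun I => by rw [hc, mul_pow])
  have hsumc : ∀ s : Finset (ℤ × ℤ), ∑ I ∈ s, c I ^ 2 ≤ S := by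
    intro s
    rw [← hSc]
    exact Summable.sum_le_tsum s (fun I _ => sq_nonneg _) hsq'
  have hcS : ∀ I, |c I| ≤ Real.sqrt S := by
    intro I
    have h1 : c I ^ 2 ≤ S := by
      have := hsumc {I}
      simpa using this
    calc |c I| = Real.sqrt (c I ^ 2) := (Real.sqrt_sq_eq_abs _).symm
      _ ≤ Real.sqrt S := Real.sqrt_le_sqrt h1
  set Z : ℤ × ℤ → Ω → ℝ := fun I ω => Y I ω * c I with hZ
  have hZmeas : ∀ I, Measurable (Z I) := fun I => (hYmeas I).mul_const _
  have hZint : ∀ I, Integrable (Z I) ℙ := fun I => (hYint I).mul_const _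
  have hEZ : ∀ I, ∫ ω, Z I ω ∂ℙ = 0 := by
    intro I
    simp only [hZ]
    rw [integral_mul_const, hEY I, zero_mul]
  have hindZ : iIndepFun Z ℙ := by
    have h := hindb.comp (fun I => fun z : ℝ => (z - m I) * c I)
      (fun I => (measurable_id.sub_const _).mul_const _)
    exact h
  set Sn : ℕ → Ω → ℝ := fun n ω => ∑ I ∈ F n, Z I ω with hSn
  have hSnmeas : ∀ n, Measurable (Sn n) := by
    intro n
    apply Finset.measurable_sum
    intro I _
    exact hZmeas I
  set X : Ω → ℝ := fun ω => ∑' I : ℤ × ℤ, Z I ω with hX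
  have hnn : ∀ I : ℤ × ℤ, AEMeasurable (fun ω => (‖Z I ω‖₊ : ℝ≥0∞)) ℙ :=
    fun I => ((hZmeas I).nnnorm.coe_nnreal_ennreal).aemeasurable
  have hZlin : ∀ I : ℤ × ℤ, ∫⁻ ω, (‖Z I ω‖₊ : ℝ≥0∞) ∂ℙ
      ≤ ENNReal.ofReal (2 * Real.sqrt S * (∫ ω, |a I ω| ∂ℙ)) := by
    intro I
    have heq : ∫⁻ ω, (‖Z I ω‖₊ : ℝ≥0∞) ∂ℙ = ENNReal.ofReal (∫ ω, |Z I ω| ∂ℙ) := by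
      rw [ofReal_integral_eq_lintegral_ofReal (hZint I).abs
        (Eventually.of_forall (fun ω => abs_nonneg _))]
      apply lintegral_congr
      intro ω
      rw [← Real.norm_eq_abs, ofReal_norm_eq_enorm, enorm_eq_nnnorm]
    rw [heq]
    apply ENNReal.ofReal_le_ofReal
    have hYb : ∫ ω, |Y I ω| ∂ℙ ≤ 2 * ∫ ω, |a I ω| ∂ℙ := by
      have hmb : |m I| ≤ ∫ ω, |a I ω| ∂ℙ := by
        have := norm_integral_le_integral_norm (μ := ℙ) (a I)
        simpa [hm, Real.norm_eq_abs] using this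
      have hptw : ∀ ω, |Y I ω| ≤ |b I ω| + |m I| := by
        intro ω
        simp only [hY]
        exact abs_sub _ _
      have habsb : ∫ ω, |b I ω| ∂ℙ = ∫ ω, |a I ω| ∂ℙ := by
        apply integral_congr_ae
        filter_upwards [hba I] with ω h
        rw [h]
      calc ∫ ω, |Y I ω| ∂ℙ ≤ ∫ ω, (|b I ω| + |m I|) ∂ℙ := by
            apply integral_mono (hYint I).abs ((hbint I).abs.add (integrable_const _)) hptw
        _ = (∫ ω, |b I ω| ∂ℙ) + |m I| := by
            rw [integral_add (hbint I).abs (integrable_const _), integral_const]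
            simp
        _ ≤ (∫ ω, |a I ω| ∂ℙ) + ∫ ω, |a I ω| ∂ℙ := by
            rw [habsb]
            exact add_le_add le_rfl hmb
        _ = 2 * ∫ ω, |a I ω| ∂ℙ := by ring
    calc ∫ ω, |Z I ω| ∂ℙ = (∫ ω, |Y I ω| ∂ℙ) * |c I| := by
          rw [← integral_mul_const]
          apply integral_congr_ae
          apply Eventually.of_forall
          intro ω
          simp only [hZ]
          rw [abs_mul]
      _ ≤ (2 * ∫ ω, |a I ω| ∂ℙ) * Real.sqrt S := by
          apply mul_le_mul hYb (hcS I) (abs_nonneg _)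
          positivity
      _ = 2 * Real.sqrt S * (∫ ω, |a I ω| ∂ℙ) := by ring
  have htota : ∫⁻ ω, (∑' I : ℤ × ℤ, (‖Z I ω‖₊ : ℝ≥0∞)) ∂ℙ ≠ ⊤ := by
    rw [lintegral_tsum hnn]
    have habs' : Summable (fun I : ℤ × ℤ => 2 * Real.sqrt S * (∫ ω, |a I ω| ∂ℙ)) :=
      habs.mul_left _
    have h1 : ∑' I : ℤ × ℤ, ∫⁻ ω, (‖Z I ω‖₊ : ℝ≥0∞) ∂ℙ
        ≤ ∑' I : ℤ × ℤ, ENNReal.ofReal (2 * Real.sqrt S * (∫ ω, |a I ω| ∂ℙ)) :=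
      ENNReal.tsum_le_tsum hZlin
    have h2 : ∑' I : ℤ × ℤ, ENNReal.ofReal (2 * Real.sqrt S * (∫ ω, |a I ω| ∂ℙ))
        = ENNReal.ofReal (∑' I : ℤ × ℤ, 2 * Real.sqrt S * (∫ ω, |a I ω| ∂ℙ)) := by
      rw [ENNReal.ofReal_tsum_of_nonneg _ habs']
      intro I
      have : 0 ≤ ∫ ω, |a I ω| ∂ℙ := integral_nonneg (fun ω => abs_nonneg _)
      positivity
    exact ne_top_of_le_ne_top (by rw [h2]; exact ENNReal.ofReal_ne_top) h1
  have haesum : ∀ᵐ ω ∂ℙ, Summable (fun I : ℤ × ℤ => Z I ω) := by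
    have hmeastsum : AEMeasurable (fun ω => ∑' I : ℤ × ℤ, (‖Z I ω‖₊ : ℝ≥0∞)) ℙ := by
      apply AEMeasurable.ennreal_tsum hnn
    filter_upwards [ae_lt_top' hmeastsum htota] with ω hω
    have h1 : Summable (fun I : ℤ × ℤ => ‖Z I ω‖₊) :=
      ENNReal.tsum_coe_ne_top_iff_summable.mp hω.ne
    exact Summable.of_nnnorm h1
  have htend : ∀ᵐ ω ∂ℙ, Tendsto (fun n => Sn n ω) atTop (nhds (X ω)) := by
    filter_upwards [haesum] with ω hω
    have h1 : HasSum (fun I : ℤ × ℤ => Z I ω) (X ω) := hω.hasSum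
    exact h1.comp hFtend
  have hXmeas : AEStronglyMeasurable X ℙ :=
    aestronglyMeasurable_of_tendsto_ae atTop
      (fun n => (hSnmeas n).aestronglyMeasurable) htend
  have hmgfX : ∀ l : ℝ, ∫⁻ ω, ENNReal.ofReal (Real.exp (l * X ω)) ∂ℙ
      ≤ ENNReal.ofReal (Real.exp (l ^ 2 * (ν * S) / 2)) := by
    intro l
    have h0 : ∀ n, ∀ I ∈ F n, Integrable (fun ω => Real.exp (l * Z I ω)) ℙ := by
      intro n I _
      refine (hmgfY I (l * c I)).congr ?_
      apply Eventually.of_forall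
      intro ω
      apply congrArg Real.exp
      simp only [hZ]
      ring
    have hintexp : ∀ n, Integrable (fun ω => Real.exp (l * Sn n ω)) ℙ := by
      intro n
      have h := hindZ.integrable_exp_mul_sum (fun I => hZmeas I) (h0 n)
      refine h.congr ?_
      apply Eventually.of_forall
      intro ω
      apply congrArg Real.exp
      apply congrArg (l * ·)
      simp [hSn, Finset.sum_apply]
    have hfin : ∀ n, ∫ ω, Real.exp (l * Sn n ω) ∂ℙ ≤ Real.exp (l ^ 2 * (ν * S) / 2) := by
      intro n
      have hmgfsum := hindZ.mgf_sum (fun I => hZmeas I) (F n) (t := l)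
      have hL : mgf (∑ I ∈ F n, Z I) ℙ l = ∫ ω, Real.exp (l * Sn n ω) ∂ℙ := by
        rw [mgf]
        apply integral_congr_ae
        apply Eventually.of_forall
        intro ω
        apply congrArg Real.exp
        apply congrArg (l * ·)
        simp [hSn, Finset.sum_apply]
      have hR : ∀ I ∈ F n, mgf (Z I) ℙ l ≤ Real.exp ((l * c I) ^ 2 * ν / 2) := by
        intro I _
        rw [mgf]
        have heq : ∫ ω, Real.exp (l * Z I ω) ∂ℙ = ∫ ω, Real.exp ((l * c I) * Y I ω) ∂ℙ := by
          apply integral_congr_ae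
          apply Eventually.of_forall
          intro ω
          apply congrArg Real.exp
          simp only [hZ]
          ring
        calc ℙ[fun ω => Real.exp (l * Z I ω)] = ∫ ω, Real.exp ((l * c I) * Y I ω) ∂ℙ := heq
          _ ≤ Real.exp ((l * c I) ^ 2 * ν / 2) := hsubY I (l * c I)
      calc ∫ ω, Real.exp (l * Sn n ω) ∂ℙ = ∏ I ∈ F n, mgf (Z I) ℙ l := by
            rw [← hL, hmgfsum]
        _ ≤ ∏ I ∈ F n, Real.exp ((l * c I) ^ 2 * ν / 2) :=
            Finset.prod_le_prod (fun I _ => mgf_nonneg) hR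
        _ = Real.exp (∑ I ∈ F n, (l * c I) ^ 2 * ν / 2) := (Real.exp_sum _ _).symm
        _ ≤ Real.exp (l ^ 2 * (ν * S) / 2) := by
            apply Real.exp_le_exp.mpr
            have h1 : ∑ I ∈ F n, (l * c I) ^ 2 * ν / 2
                = (l ^ 2 * ν / 2) * ∑ I ∈ F n, c I ^ 2 := by
              rw [Finset.mul_sum]
              apply Finset.sum_congr rfl
              intro I _
              ring
            rw [h1]
            calc (l ^ 2 * ν / 2) * ∑ I ∈ F n, c I ^ 2 ≤ (l ^ 2 * ν / 2) * S :=
                  mul_le_mul_of_nonneg_left (hsumc (F n)) (by positivity)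
              _ = l ^ 2 * (ν * S) / 2 := by ring
    have hlint : ∀ n, ∫⁻ ω, ENNReal.ofReal (Real.exp (l * Sn n ω)) ∂ℙ
        ≤ ENNReal.ofReal (Real.exp (l ^ 2 * (ν * S) / 2)) := by
      intro n
      rw [← ofReal_integral_eq_lintegral_ofReal (hintexp n)
        (Eventually.of_forall (fun ω => (Real.exp_pos _).le))]
      exact ENNReal.ofReal_le_ofReal (hfin n)
    have hpt : ∀ᵐ ω ∂ℙ, ENNReal.ofReal (Real.exp (l * X ω))
        ≤ liminf (fun n => ENNReal.ofReal (Real.exp (l * Sn n ω))) atTop := by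
      filter_upwards [htend] with ω hω
      have h1 : Tendsto (fun n => ENNReal.ofReal (Real.exp (l * Sn n ω))) atTop
          (nhds (ENNReal.ofReal (Real.exp (l * X ω)))) := by
        apply (ENNReal.continuous_ofReal.tendsto _).comp
        apply (Real.continuous_exp.tendsto _).comp
        exact hω.const_mul l
      exact h1.liminf_eq.ge
    calc ∫⁻ ω, ENNReal.ofReal (Real.exp (l * X ω)) ∂ℙ
        ≤ ∫⁻ ω, liminf (fun n => ENNReal.ofReal (Real.exp (l * Sn n ω))) atTop ∂ℙ :=
          lintegral_mono_ae hpt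
      _ ≤ liminf (fun n => ∫⁻ ω, ENNReal.ofReal (Real.exp (l * Sn n ω)) ∂ℙ) atTop := by
          apply lintegral_liminf_le'
          intro n
          exact (ENNReal.measurable_ofReal.comp
            (Real.measurable_exp.comp ((hSnmeas n).const_mul l))).aemeasurable
      _ ≤ liminf (fun _ : ℕ => ENNReal.ofReal (Real.exp (l ^ 2 * (ν * S) / 2))) atTop :=
          liminf_le_liminf (Eventually.of_forall hlint)
      _ = ENNReal.ofReal (Real.exp (l ^ 2 * (ν * S) / 2)) := liminf_const _
  have hall : ∀ᵐ ω ∂ℙ, ∀ I : ℤ × ℤ, a I ω = b I ω := ae_all_iff.mpr (fun I => hba I)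
  have haeX : ∀ᵐ ω ∂ℙ, (∑' I : ℤ × ℤ,
      (a I ω - m I) * waveletDyadic ψ I.1 I.2 x * waveletDyadic ψ I.1 I.2 y) = X ω := by
    filter_upwards [hall] with ω hω
    simp only [hX]
    apply tsum_congr
    intro I
    rw [hω I]
    simp only [hZ, hY, hc]
    ring
  constructor
  · intro t ht
    have hseteq : ℙ {ω | t < |∑' I : ℤ × ℤ,
        (a I ω - m I) * waveletDyadic ψ I.1 I.2 x * waveletDyadic ψ I.1 I.2 y|}
        = ℙ {ω | t < |X ω|} := by
      apply measure_congr
      rw [Filter.eventuallyEq_set]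
      filter_upwards [haeX] with ω h
      simp only [Set.mem_setOf_eq, h]
    rw [hseteq]
    by_cases hS0' : S = 0
    · have hczero : ∀ I : ℤ × ℤ, c I = 0 := by
        intro I
        have h1 : c I ^ 2 ≤ 0 := by
          have := hsumc {I}
          simpa [hS0'] using this
        have h2 : c I ^ 2 = 0 := le_antisymm h1 (sq_nonneg _)
        exact pow_eq_zero_iff (n := 2) (by norm_num) |>.mp h2
      have hX0 : ∀ ω, X ω = 0 := by
        intro ω
        simp only [hX]
        have : ∀ I : ℤ × ℤ, Z I ω = 0 := by
          intro I
          simp only [hZ, hczero I, mul_zero]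
        rw [tsum_congr this, tsum_zero]
      have hempty : {ω : Ω | t < |X ω|} = ∅ := by
        ext ω
        simp [hX0 ω, Set.mem_setOf_eq, abs_zero]
        linarith
      rw [hempty]
      simp
    · have hSpos : 0 < S := lt_of_le_of_ne hS0 (Ne.symm hS0')
      have hKpos : 0 < ν * S := mul_pos hν hSpos
      have htail := tail_bound_of_lintegral_exp hXmeas hKpos hmgfX ht
      refine htail.trans ?_
      apply ENNReal.ofReal_le_ofReal
      have h2 : -t ^ 2 / (2 * (ν * S)) ≤ -t ^ 2 / (4 * ν * S) := by
        rw [neg_div, neg_div, neg_le_neg_iff]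
        apply div_le_div_of_nonneg_left (sq_nonneg t) (by positivity)
        nlinarith
      exact mul_le_mul_of_nonneg_left (Real.exp_le_exp.mpr h2) (by norm_num)
  · -- L² estimate
    have hmean_sum : Summable (fun I : ℤ × ℤ =>
        m I * waveletDyadic ψ I.1 I.2 x * waveletDyadic ψ I.1 I.2 y) := by
      have h1 : Summable (fun I : ℤ × ℤ =>
          |m I * waveletDyadic ψ I.1 I.2 x * waveletDyadic ψ I.1 I.2 y|) := by
        apply Summable.of_nonneg_of_le (fun I => abs_nonneg _) _ (habs.mul_left (Real.sqrt S))
        intro I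
        have hmb : |m I| ≤ ∫ ω, |a I ω| ∂ℙ := by
          have := norm_integral_le_integral_norm (μ := ℙ) (a I)
          simpa [hm, Real.norm_eq_abs] using this
        calc |m I * waveletDyadic ψ I.1 I.2 x * waveletDyadic ψ I.1 I.2 y|
            = |m I| * |c I| := by
              rw [mul_assoc, abs_mul, hc, abs_mul]
          _ ≤ (∫ ω, |a I ω| ∂ℙ) * Real.sqrt S :=
              mul_le_mul hmb (hcS I) (abs_nonneg _) (integral_nonneg (fun _ => abs_nonneg _))
          _ = Real.sqrt S * (∫ ω, |a I ω| ∂ℙ) := mul_comm _ _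
      exact h1.of_abs
    have haefn : (fun ω =>
        (∑' I : ℤ × ℤ, a I ω * waveletDyadic ψ I.1 I.2 x * waveletDyadic ψ I.1 I.2 y)
        - ∑' I : ℤ × ℤ, m I * waveletDyadic ψ I.1 I.2 x * waveletDyadic ψ I.1 I.2 y)
        =ᵐ[ℙ] X := by
      filter_upwards [hall, haesum] with ω h1 h2
      have hfeq : (fun I : ℤ × ℤ => a I ω * waveletDyadic ψ I.1 I.2 x * waveletDyadic ψ I.1 I.2 y)
          = fun I : ℤ × ℤ => Z I ω
            + m I * waveletDyadic ψ I.1 I.2 x * waveletDyadic ψ I.1 I.2 y := by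
        funext I
        rw [h1 I]
        simp only [hZ, hY, hc]
        ring
      have hsa : Summable (fun I : ℤ × ℤ =>
          a I ω * waveletDyadic ψ I.1 I.2 x * waveletDyadic ψ I.1 I.2 y) := by
        rw [hfeq]
        exact h2.add hmean_sum
      simp only [hX]
      rw [← Summable.tsum_sub hsa hmean_sum]
      apply tsum_congr
      intro I
      rw [h1 I]
      simp only [hZ, hY, hc]
      ring
    rw [eLpNorm_congr_ae haefn]
    have hvarSn : ∀ n, ∫⁻ ω, ((‖Sn n ω‖₊ : ℝ≥0∞)) ^ 2 ∂ℙ ≤ ENNReal.ofReal (ν' * S) := by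
      intro n
      have hMem : ∀ I ∈ F n, MemLp (Z I) 2 ℙ := by
        intro I _
        have h := (hYL2 I).const_mul (c I)
        have heq : (fun ω => c I * Y I ω) = Z I := by
          funext ω
          simp only [hZ]
          ring
        rwa [heq] at h
      have hpairI : Set.Pairwise ↑(F n) (fun i j => IndepFun (Z i) (Z j) ℙ) :=
        fun i _ j _ hij => hindZ.indepFun hij
      have hvar := IndepFun.variance_sum hMem hpairI
      have hsum_mem : MemLp (∑ I ∈ F n, Z I) 2 ℙ := memLp_finset_sum' _ hMem
      have hE0 : ℙ[∑ I ∈ F n, Z I] = 0 := by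
        calc ℙ[∑ I ∈ F n, Z I] = ∫ ω, ∑ I ∈ F n, Z I ω ∂ℙ := by
              apply integral_congr_ae
              apply Eventually.of_forall
              intro ω
              simp [Finset.sum_apply]
          _ = ∑ I ∈ F n, ∫ ω, Z I ω ∂ℙ := integral_finset_sum _ (fun I _ => hZint I)
          _ = 0 := Finset.sum_eq_zero (fun I _ => hEZ I)
      have hev : evariance (∑ I ∈ F n, Z I) ℙ = ∫⁻ ω, ((‖Sn n ω‖₊ : ℝ≥0∞)) ^ 2 ∂ℙ := by
        simp only [evariance, hE0, sub_zero]
        apply lintegral_congr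
        intro ω
        congr 2
        simp [hSn, Finset.sum_apply]
      have hvar_le : variance (∑ I ∈ F n, Z I) ℙ ≤ ν' * S := by
        rw [hvar]
        calc ∑ I ∈ F n, variance (Z I) ℙ ≤ ∑ I ∈ F n, c I ^ 2 * ν' := by
              apply Finset.sum_le_sum
              intro I _
              have heq : Z I = fun ω => c I * Y I ω := by
                funext ω
                simp only [hZ]
                ring
              rw [heq, variance_const_mul]
              exact mul_le_mul_of_nonneg_left (hvarY I) (sq_nonneg _)
          _ = (∑ I ∈ F n, c I ^ 2) * ν' := by rw [← Finset.sum_mul]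
          _ ≤ S * ν' := mul_le_mul_of_nonneg_right (hsumc (F n)) hν'0.le
          _ = ν' * S := mul_comm _ _
      calc ∫⁻ ω, ((‖Sn n ω‖₊ : ℝ≥0∞)) ^ 2 ∂ℙ = evariance (∑ I ∈ F n, Z I) ℙ := hev.symm
        _ = ENNReal.ofReal (variance (∑ I ∈ F n, Z I) ℙ) := hsum_mem.ofReal_variance_eq.symm
        _ ≤ ENNReal.ofReal (ν' * S) := ENNReal.ofReal_le_ofReal hvar_le
    have hXsq : ∫⁻ ω, ((‖X ω‖₊ : ℝ≥0∞)) ^ 2 ∂ℙ ≤ ENNReal.ofReal (ν' * S) := by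
      have hpt : ∀ᵐ ω ∂ℙ, ((‖X ω‖₊ : ℝ≥0∞)) ^ 2
          ≤ liminf (fun n => ((‖Sn n ω‖₊ : ℝ≥0∞)) ^ 2) atTop := by
        filter_upwards [htend] with ω hω
        have h2 : Tendsto (fun n => ‖Sn n ω‖₊) atTop (nhds (‖X ω‖₊)) :=
          (continuous_nnnorm.tendsto _).comp hω
        have h3 : Tendsto (fun n => ((‖Sn n ω‖₊ : ℝ≥0∞))) atTop
            (nhds ((‖X ω‖₊ : ℝ≥0∞))) := (ENNReal.continuous_coe.tendsto _).comp h2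
        have h4 : Tendsto (fun n => ((‖Sn n ω‖₊ : ℝ≥0∞)) ^ 2) atTop
            (nhds (((‖X ω‖₊ : ℝ≥0∞)) ^ 2)) := ((ENNReal.continuous_pow 2).tendsto _).comp h3
        exact h4.liminf_eq.ge
      calc ∫⁻ ω, ((‖X ω‖₊ : ℝ≥0∞)) ^ 2 ∂ℙ
          ≤ ∫⁻ ω, liminf (fun n => ((‖Sn n ω‖₊ : ℝ≥0∞)) ^ 2) atTop ∂ℙ :=
            lintegral_mono_ae hpt
        _ ≤ liminf (fun n => ∫⁻ ω, ((‖Sn n ω‖₊ : ℝ≥0∞)) ^ 2 ∂ℙ) atTop := by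
            apply lintegral_liminf_le'
            intro n
            exact (((hSnmeas n).nnnorm.coe_nnreal_ennreal).pow_const 2).aemeasurable
        _ ≤ liminf (fun _ : ℕ => ENNReal.ofReal (ν' * S)) atTop :=
            liminf_le_liminf (Eventually.of_forall hvarSn)
        _ = ENNReal.ofReal (ν' * S) := liminf_const _
    have h2S : ν' * S ≤ ν' * (C₂ / D ^ 2) :=
      mul_le_mul_of_nonneg_left hSle hν'0.le
    calc eLpNorm X 2 ℙ
        = (∫⁻ ω, ((‖X ω‖₊ : ℝ≥0∞)) ^ (2:ℝ) ∂ℙ) ^ (1/(2:ℝ)) := by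
          rw [eLpNorm_eq_lintegral_rpow_enorm_toReal (by norm_num) (by norm_num)]
          norm_num
          simp only [enorm_eq_nnnorm]
      _ = (∫⁻ ω, ((‖X ω‖₊ : ℝ≥0∞)) ^ 2 ∂ℙ) ^ (1/(2:ℝ)) := by
          congr 1
          apply lintegral_congr
          intro ω
          rw [← ENNReal.rpow_natCast]
          norm_num
      _ ≤ (ENNReal.ofReal (ν' * (C₂ / D ^ 2))) ^ (1/(2:ℝ)) := by
          apply ENNReal.rpow_le_rpow _ (by norm_num)
          exact hXsq.trans (ENNReal.ofReal_le_ofReal h2S)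
      _ ≤ ENNReal.ofReal (B / D) := by
          rw [ENNReal.ofReal_rpow_of_nonneg (by positivity) (by norm_num)]
          apply ENNReal.ofReal_le_ofReal
          have hvaleq : (ν' * (C₂ / D ^ 2)) ^ (1/(2:ℝ)) = Real.sqrt (ν' * C₂) / D := by
            rw [← Real.sqrt_eq_rpow]
            rw [show ν' * (C₂ / D ^ 2) = (ν' * C₂) / D ^ 2 by ring]
            rw [Real.sqrt_div (by positivity) (D ^ 2)]
            rw [Real.sqrt_sq hD0.le]
          rw [hvaleq, hB]
          gcongr
          linarith [Real.sqrt_nonneg (ν' * C₂)]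
  done
end
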